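/- arXiv:1811.07527 — 4 statements merged into one kernel-verified Lean document; each statement's English description precedes it below -/
import Mathlib

section
/- Let m, k ∈ ℕ with m, k ≥ 1 and identify ℝ^{m+k} = ℝ^m × ℝ^k, writing points as x = (y, z) with y ∈ ℝ^m, z ∈ ℝ^k. There exists a constant C > 0, depending only on m and k, such that for every measurable u : ℝ^{m+k} → ℂ with ‖u‖_{B*(ℝ^{m+k})} < ∞ and every measurable φ : ℝ^m → ℂ with M := ( ∫_{ℝ^m} (1+|y|²) |φ(y)|² dy )^{1/2} < ∞, the function v(z) := ∫_{ℝ^m} u(y, z) \overline{φ(y)} dy is defined by an absolutely convergent integral for almost every z ∈ ℝ^k, and satisfies ‖v‖_{B*(ℝ^k)} ≤ C · M · ‖u‖_{B*(ℝ^{m+k})}. -/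
open MeasureTheory Metric Filter
open scoped ENNReal RealInnerProductSpace Topology

noncomputable section

/-- Euclidean space `ℝ^n`. -/
abbrev Euc (n : ℕ) := EuclideanSpace ℝ (Fin n)

/-- The Agmon–Hörmander dyadic shells: `Ω_0 = {|x| < 1}`,
`Ω_j = {2^(j-1) < |x| < 2^j}` for `j ≥ 1`. -/
def AHshell (n : ℕ) (j : ℕ) : Set (Euc n) :=
  if j = 0 then Metric.ball 0 1 else {x | (2:ℝ) ^ (j - 1) < ‖x‖ ∧ ‖x‖ < (2:ℝ) ^ j}

/-- The Agmon–Hörmander norm `‖u‖_{B*} = sup_j ρ_j^{-1/2} ‖u‖_{L²(Ω_j)}`,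
valued in `ℝ≥0∞`. -/
def BStarNorm (n : ℕ) (u : Euc n → ℂ) : ℝ≥0∞ :=
  ⨆ j : ℕ, (2 : ℝ≥0∞) ^ (-(j : ℝ) / 2) * eLpNorm u 2 (volume.restrict (AHshell n j))

/-- Concatenation `ℝ^m × ℝ^k → ℝ^{m+k}`, `(y,z) ↦ x = (y,z)`. -/
def join (m k : ℕ) (y : Euc m) (z : Euc k) : Euc (m + k) :=
  (WithLp.equiv 2 (Fin (m + k) → ℝ)).symm (Fin.append (fun i => y i) (fun i => z i))

open Set

lemma euc_nontrivial (n : ℕ) (hn : 1 ≤ n) : Nontrivial (Euc n) := by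
  refine ⟨EuclideanSpace.single (⟨0, hn⟩ : Fin n) (1:ℝ), 0, ?_⟩
  intro h
  have := congrArg norm h
  rw [EuclideanSpace.norm_single] at this
  simp at this

lemma mp_join (m k : ℕ) :
    MeasurePreserving (fun p : Euc m × Euc k => join m k p.1 p.2)
      (volume.prod volume) volume := by
  have h1 := (EuclideanSpace.volume_preserving_symm_measurableEquiv_toLp (Fin m)).prod
    (EuclideanSpace.volume_preserving_symm_measurableEquiv_toLp (Fin k))
  have h2 := MeasureTheory.volume_measurePreserving_sumPiEquivProdPi_symm
    (fun _ : Fin m ⊕ Fin k => ℝ)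
  have h3 := MeasureTheory.volume_measurePreserving_piCongrLeft
    (fun _ : Fin (m+k) => ℝ) finSumFinEquiv
  have h4 := (EuclideanSpace.volume_preserving_symm_measurableEquiv_toLp (Fin (m+k))).symm
  have h := h4.comp (h3.comp (h2.comp h1))
  convert h using 1
  case e'_4 => rfl
  funext p
  show join m k p.1 p.2 = _
  simp only [Function.comp_apply]
  refine ((MeasurableEquiv.toLp 2 (Fin (m+k) → ℝ)).symm.symm_apply_eq).mpr ?_ |>.symm |>.symm
  funext i
  simp only [MeasurableEquiv.coe_toEquiv, MeasurableEquiv.apply_symm_apply]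
  refine Fin.addCases (fun l => ?_) (fun r => ?_) i
  · rw [Fin.append_left, ← finSumFinEquiv_apply_left l,
      MeasurableEquiv.piCongrLeft_apply_apply]
    rfl
  · rw [Fin.append_right, ← finSumFinEquiv_apply_right r,
      MeasurableEquiv.piCongrLeft_apply_apply]
    rfl

lemma measurableSet_AHshell (n j : ℕ) : MeasurableSet (AHshell n j) := by
  unfold AHshell
  split
  · exact measurableSet_ball
  · exact (measurableSet_lt measurable_const measurable_norm).inter
      (measurableSet_lt measurable_norm measurable_const)

lemma norm_lt_of_mem_AHshell {n j : ℕ} {x : Euc n} (h : x ∈ AHshell n j) :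
    ‖x‖ < 2 ^ j := by
  unfold AHshell at h
  split at h
  · next hj => simpa [hj, mem_ball_zero_iff] using h
  · exact h.2

lemma lt_norm_of_mem_AHshell {n j : ℕ} (hj : j ≠ 0) {x : Euc n} (h : x ∈ AHshell n j) :
    (2:ℝ) ^ (j - 1) < ‖x‖ := by
  unfold AHshell at h
  rw [if_neg hj] at h
  exact h.1

lemma compl_iUnion_AHshell_null (n : ℕ) (hn : 1 ≤ n) :
    volume ((⋃ j, AHshell n j)ᶜ) = 0 := by
  haveI : Nonempty (Fin n) := ⟨⟨0, hn⟩⟩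
  haveI : Nontrivial (Euc n) := by
    refine ⟨EuclideanSpace.single (⟨0, hn⟩ : Fin n) (1:ℝ), 0, ?_⟩
    intro h
    have := congrArg norm h
    rw [EuclideanSpace.norm_single] at this
    simp at this
  have hsub : (⋃ j, AHshell n j)ᶜ ⊆ ⋃ j : ℕ, sphere (0 : Euc n) (2 ^ j) := by
    intro x hx
    simp only [mem_compl_iff, mem_iUnion, not_exists] at hx
    by_cases h1 : ‖x‖ < 1
    · exact absurd (by simpa [AHshell, mem_ball_zero_iff] using h1) (hx 0)
    push_neg at h1
    obtain ⟨j, hj1, hj2⟩ := exists_nat_pow_near h1 one_lt_two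
    rcases eq_or_lt_of_le hj1 with he | hl
    · exact mem_iUnion.mpr ⟨j, by simpa [mem_sphere_zero_iff_norm] using he.symm⟩
    · refine absurd ?_ (hx (j+1))
      unfold AHshell
      rw [if_neg (Nat.succ_ne_zero j)]
      exact ⟨by simpa using hl, by simpa using hj2⟩
  refine measure_mono_null hsub ?_
  rw [measure_iUnion_null_iff]
  intro j
  exact Measure.addHaar_sphere volume (0 : Euc n) ((2:ℝ) ^ j)

lemma ae_mem_iUnion_AHshell (n : ℕ) (hn : 1 ≤ n) :
    ∀ᵐ x : Euc n, x ∈ ⋃ j, AHshell n j := by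
  have h := compl_iUnion_AHshell_null n hn
  have e : {x : Euc n | ¬ x ∈ ⋃ j, AHshell n j} = (⋃ j, AHshell n j)ᶜ := rfl
  rw [ae_iff, e]
  exact h

lemma join_norm_sq (m k : ℕ) (y : Euc m) (z : Euc k) :
    ‖join m k y z‖ ^ 2 = ‖y‖ ^ 2 + ‖z‖ ^ 2 := by
  have hx : ‖join m k y z‖ ^ 2 = ∑ i : Fin (m+k), ‖(join m k y z) i‖ ^ 2 := by
    rw [EuclideanSpace.norm_eq, Real.sq_sqrt (Finset.sum_nonneg fun i _ => by positivity)]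
  have hy : ‖y‖ ^ 2 = ∑ i : Fin m, ‖y i‖ ^ 2 := by
    rw [EuclideanSpace.norm_eq, Real.sq_sqrt (Finset.sum_nonneg fun i _ => by positivity)]
  have hz : ‖z‖ ^ 2 = ∑ i : Fin k, ‖z i‖ ^ 2 := by
    rw [EuclideanSpace.norm_eq, Real.sq_sqrt (Finset.sum_nonneg fun i _ => by positivity)]
  rw [hx, hy, hz, Fin.sum_univ_add]
  congr 1
  · refine Finset.sum_congr rfl fun l _ => ?_
    have : (join m k y z) (Fin.castAdd k l) = y l := Fin.append_left _ _ _
    rw [this]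
  · refine Finset.sum_congr rfl fun r _ => ?_
    have : (join m k y z) (Fin.natAdd m r) = z r := Fin.append_right _ _ _
    rw [this]

lemma join_mem_target {m k : ℕ} {y : Euc m} {z : Euc k} {i j : ℕ}
    (hy : y ∈ AHshell m i) (hz : z ∈ AHshell k j) :
    join m k y z ∈ (AHshell (m+k) (max i j) ∪ AHshell (m+k) (max i j + 1))
      ∪ sphere (0 : Euc (m+k)) (2 ^ (max i j)) := by
  set ℓ := max i j with hℓdef
  set x := join m k y z with hxdef
  have hx2 : ‖x‖ ^ 2 = ‖y‖ ^ 2 + ‖z‖ ^ 2 := join_norm_sq m k y z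
  have hyi : ‖y‖ < 2 ^ i := norm_lt_of_mem_AHshell hy
  have hzj : ‖z‖ < 2 ^ j := norm_lt_of_mem_AHshell hz
  have hxn : (0:ℝ) ≤ ‖x‖ := norm_nonneg _
  have h2i : (2:ℝ) ^ i ≤ 2 ^ ℓ := pow_le_pow_right₀ one_le_two (le_max_left _ _)
  have h2j : (2:ℝ) ^ j ≤ 2 ^ ℓ := pow_le_pow_right₀ one_le_two (le_max_right _ _)
  have hupper : ‖x‖ < 2 ^ (ℓ + 1) := by
    have h1 : ‖x‖ ^ 2 < ((2:ℝ) ^ (ℓ+1)) ^ 2 := by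
      have e : (2:ℝ) ^ (ℓ+1) = 2 * 2^ℓ := by ring
      rw [e]
      nlinarith [norm_nonneg y, norm_nonneg z]
    exact lt_of_pow_lt_pow_left₀ 2 (by positivity) h1
  have hlower : 1 ≤ ℓ → (2:ℝ) ^ (ℓ - 1) < ‖x‖ := by
    intro hℓ1
    rcases max_choice i j with hmx | hmx
    · have hi1 : i ≠ 0 := by omega
      have h := lt_norm_of_mem_AHshell hi1 hy
      have hyx : ‖y‖ ≤ ‖x‖ := by
        refine le_of_pow_le_pow_left₀ two_ne_zero hxn ?_
        nlinarith [norm_nonneg z]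
      rw [show ℓ - 1 = i - 1 by omega]
      exact lt_of_lt_of_le h hyx
    · have hj1 : j ≠ 0 := by omega
      have h := lt_norm_of_mem_AHshell hj1 hz
      have hzx : ‖z‖ ≤ ‖x‖ := by
        refine le_of_pow_le_pow_left₀ two_ne_zero hxn ?_
        nlinarith [norm_nonneg y]
      rw [show ℓ - 1 = j - 1 by omega]
      exact lt_of_lt_of_le h hzx
  rcases lt_trichotomy ‖x‖ ((2:ℝ) ^ ℓ) with hc | hc | hc
  · left; left
    unfold AHshell
    split
    · next h0 => simpa [mem_ball_zero_iff, h0] using (by simpa [h0] using hc : ‖x‖ < (2:ℝ)^(0:ℕ))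
    · next h0 => exact ⟨hlower (by omega), hc⟩
  · right
    simpa [mem_sphere_zero_iff_norm] using hc
  · left; right
    unfold AHshell
    rw [if_neg (Nat.succ_ne_zero ℓ)]
    exact ⟨by simpa using hc, hupper⟩

lemma two_rpow_ne_zero (r : ℝ) : (2:ℝ≥0∞) ^ r ≠ 0 :=
  (ENNReal.rpow_pos (by norm_num) (by norm_num)).ne'

lemma two_rpow_ne_top (r : ℝ) : (2:ℝ≥0∞) ^ r ≠ ⊤ := by
  intro h
  rcases ENNReal.rpow_eq_top_iff.mp h with ⟨h0, _⟩ | ⟨h0, _⟩ <;> norm_num at h0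

lemma shell_S_le (n ℓ : ℕ) (u : Euc n → ℂ) :
    ∫⁻ x in AHshell n ℓ, (‖u x‖₊ : ℝ≥0∞) ^ (2:ℝ)
      ≤ 2 ^ ℓ * (BStarNorm n u) ^ (2:ℝ) := by
  set S := ∫⁻ x in AHshell n ℓ, (‖u x‖₊ : ℝ≥0∞) ^ (2:ℝ) with hS
  have h : (2:ℝ≥0∞) ^ (-(ℓ:ℝ)/2) * eLpNorm u 2 (volume.restrict (AHshell n ℓ))
      ≤ BStarNorm n u :=
    le_iSup (fun j : ℕ => (2 : ℝ≥0∞) ^ (-(j : ℝ) / 2)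
      * eLpNorm u 2 (volume.restrict (AHshell n j))) ℓ
  have he : eLpNorm u 2 (volume.restrict (AHshell n ℓ)) = S ^ (1/2:ℝ) := by
    rw [eLpNorm_eq_lintegral_rpow_enorm_toReal (by norm_num) (by norm_num)]
    norm_num [hS, enorm_eq_nnnorm]
  rw [he] at h
  have hcancel : (2:ℝ≥0∞) ^ ((ℓ:ℝ)/2) * 2 ^ (-(ℓ:ℝ)/2) = 1 := by
    rw [← ENNReal.rpow_add _ _ (by norm_num) (by norm_num),
      show (ℓ:ℝ)/2 + -(ℓ:ℝ)/2 = 0 by ring, ENNReal.rpow_zero]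
  have h2 : S ^ (1/2:ℝ) ≤ 2 ^ ((ℓ:ℝ)/2) * BStarNorm n u := by
    calc S ^ (1/2:ℝ) = (2:ℝ≥0∞) ^ ((ℓ:ℝ)/2) * 2 ^ (-(ℓ:ℝ)/2) * S ^ (1/2:ℝ) := by
          rw [hcancel, one_mul]
      _ = 2 ^ ((ℓ:ℝ)/2) * (2 ^ (-(ℓ:ℝ)/2) * S ^ (1/2:ℝ)) := by rw [mul_assoc]
      _ ≤ 2 ^ ((ℓ:ℝ)/2) * BStarNorm n u := mul_le_mul_right h _
  calc S = (S ^ (1/2:ℝ)) ^ (2:ℝ) := by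
        rw [← ENNReal.rpow_mul]; norm_num
    _ ≤ ((2:ℝ≥0∞) ^ ((ℓ:ℝ)/2) * BStarNorm n u) ^ (2:ℝ) :=
        ENNReal.rpow_le_rpow h2 (by norm_num)
    _ = 2 ^ ℓ * (BStarNorm n u) ^ (2:ℝ) := by
        rw [ENNReal.mul_rpow_of_nonneg _ _ (by norm_num), ← ENNReal.rpow_mul,
          show (ℓ:ℝ)/2*2 = (ℓ:ℕ) by push_cast; ring, ENNReal.rpow_natCast]

lemma weight_inv_le {m i : ℕ} {y : Euc m} (hy : y ∈ AHshell m i) :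
    (ENNReal.ofReal (1 + ‖y‖^2))⁻¹ ≤ 4 * ((2:ℝ≥0∞) ^ (2*i))⁻¹ := by
  set w := ENNReal.ofReal (1 + ‖y‖^2) with hwdef
  have hw0 : w ≠ 0 := by
    rw [hwdef]
    simp only [ne_eq, ENNReal.ofReal_eq_zero, not_le]
    positivity
  have hwt : w ≠ ⊤ := ENNReal.ofReal_ne_top
  have hreal : (2:ℝ) ^ (2*i) ≤ 4 * (1 + ‖y‖^2) := by
    rcases Nat.eq_zero_or_pos i with h0 | hpos
    · subst h0; norm_num; nlinarith [norm_nonneg y, sq_nonneg ‖y‖]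
    · have h := lt_norm_of_mem_AHshell (by omega) hy
      have h2 : (2:ℝ)^(2*i) = 4 * ((2:ℝ)^(i-1))^2 := by
        rw [← pow_mul, show (i-1)*2 = 2*i - 2 by omega,
          show (2:ℝ)^(2*i) = 2^(2*i-2) * 2^2 by rw [← pow_add]; congr 1; omega]
        ring
      have hy0 : (0:ℝ) ≤ 2^(i-1) := by positivity
      nlinarith [h, hy0]
  have hofReal : (2:ℝ≥0∞) ^ (2*i) ≤ 4 * w := by
    have := ENNReal.ofReal_le_ofReal hreal
    rw [ENNReal.ofReal_mul (by norm_num)] at this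
    calc (2:ℝ≥0∞) ^ (2*i) = ENNReal.ofReal ((2:ℝ)^(2*i)) := by
          rw [ENNReal.ofReal_pow (by norm_num)]; norm_num
      _ ≤ ENNReal.ofReal 4 * w := this
      _ = 4 * w := by norm_num
  have hp0 : ((2:ℝ≥0∞) ^ (2*i)) ≠ 0 := pow_ne_zero _ (by norm_num)
  have hpt : ((2:ℝ≥0∞) ^ (2*i)) ≠ ⊤ := ENNReal.pow_ne_top (by norm_num)
  have h1 : (2:ℝ≥0∞) ^ (2*i) * w⁻¹ ≤ 4 := by
    calc (2:ℝ≥0∞) ^ (2*i) * w⁻¹ ≤ (4 * w) * w⁻¹ := mul_le_mul_left hofReal _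
      _ = 4 * (w * w⁻¹) := by rw [mul_assoc]
      _ = 4 := by rw [ENNReal.mul_inv_cancel hw0 hwt, mul_one]
  calc w⁻¹ = ((2:ℝ≥0∞) ^ (2*i))⁻¹ * ((2:ℝ≥0∞) ^ (2*i) * w⁻¹) := by
        rw [← mul_assoc, ENNReal.inv_mul_cancel hp0 hpt, one_mul]
    _ ≤ ((2:ℝ≥0∞) ^ (2*i))⁻¹ * 4 := mul_le_mul_right h1 _
    _ = 4 * ((2:ℝ≥0∞) ^ (2*i))⁻¹ := mul_comm _ _

lemma csum_le (j : ℕ) :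
    ∑' i : ℕ, (4 * ((2:ℝ≥0∞) ^ (2*i))⁻¹) * 2 ^ (max i j) ≤ 8 * 2 ^ j := by
  have hterm : ∀ i : ℕ, (4 * ((2:ℝ≥0∞) ^ (2*i))⁻¹) * 2 ^ (max i j)
      ≤ 4 * 2 ^ j * ((2:ℝ≥0∞)⁻¹) ^ i := by
    intro i
    have hsplit : ((2:ℝ≥0∞) ^ (2*i))⁻¹ = ((2:ℝ≥0∞)⁻¹)^i * ((2:ℝ≥0∞)⁻¹)^i := by
      rw [two_mul, pow_add, ENNReal.mul_inv (by simp) (by simp), ← ENNReal.inv_pow]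
    have hile : ((2:ℝ≥0∞)⁻¹) ^ i ≤ 1 := pow_le_one' (by simp [ENNReal.inv_le_one]) i
    have hcan : ((2:ℝ≥0∞)⁻¹)^i * (2:ℝ≥0∞)^i = 1 := by
      rw [← ENNReal.inv_pow, ENNReal.inv_mul_cancel (pow_ne_zero _ (by norm_num))
        (ENNReal.pow_ne_top (by norm_num))]
    rcases le_total i j with hij | hij
    · rw [max_eq_right hij, hsplit]
      calc 4 * (((2:ℝ≥0∞)⁻¹)^i * ((2:ℝ≥0∞)⁻¹)^i) * 2 ^ j
          = (4 * 2^j * ((2:ℝ≥0∞)⁻¹)^i) * ((2:ℝ≥0∞)⁻¹)^i := by ring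
        _ ≤ (4 * 2^j * ((2:ℝ≥0∞)⁻¹)^i) * 1 := mul_le_mul_right hile _
        _ = 4 * 2^j * ((2:ℝ≥0∞)⁻¹)^i := mul_one _
    · rw [max_eq_left hij, hsplit]
      have h2j : (1:ℝ≥0∞) ≤ 2 ^ j := one_le_pow_of_one_le' (by norm_num) j
      calc 4 * (((2:ℝ≥0∞)⁻¹)^i * ((2:ℝ≥0∞)⁻¹)^i) * 2 ^ i
          = (4 * ((2:ℝ≥0∞)⁻¹)^i) * (((2:ℝ≥0∞)⁻¹)^i * 2^i) := by ring
        _ = (4 * ((2:ℝ≥0∞)⁻¹)^i) * 1 := by rw [hcan]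
        _ = 4 * 1 * ((2:ℝ≥0∞)⁻¹)^i := by ring
        _ ≤ 4 * 2^j * ((2:ℝ≥0∞)⁻¹)^i := by
            exact mul_le_mul_left (mul_le_mul_right h2j _) _
  calc ∑' i : ℕ, (4 * ((2:ℝ≥0∞) ^ (2*i))⁻¹) * 2 ^ (max i j)
      ≤ ∑' i : ℕ, 4 * 2 ^ j * ((2:ℝ≥0∞)⁻¹) ^ i := ENNReal.tsum_le_tsum hterm
    _ = 4 * 2 ^ j * ∑' i : ℕ, ((2:ℝ≥0∞)⁻¹) ^ i := ENNReal.tsum_mul_left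
    _ = 4 * 2 ^ j * 2 := by
        rw [ENNReal.tsum_geometric]
        congr 1
        rw [show (1:ℝ≥0∞) - 2⁻¹ = 2⁻¹ by
          rw [← ENNReal.inv_two_add_inv_two, ENNReal.add_sub_cancel_right (by simp)]]
        simp
    _ = 8 * 2 ^ j := by ring

lemma holder_step (m k : ℕ) (u : Euc (m+k) → ℂ) (φ : Euc m → ℂ)
    (hu : Measurable u) (hφ : Measurable φ) (z : Euc k) :
    ∫⁻ y : Euc m, (‖u (join m k y z)‖₊ : ℝ≥0∞) * ‖φ y‖₊
      ≤ (∫⁻ y : Euc m, (ENNReal.ofReal (1 + ‖y‖^2))⁻¹ * (‖u (join m k y z)‖₊:ℝ≥0∞)^(2:ℝ)) ^ (1/2:ℝ)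
        * (∫⁻ y : Euc m, ENNReal.ofReal (1 + ‖y‖^2) * (‖φ y‖₊:ℝ≥0∞)^2) ^ (1/2:ℝ) := by
  set w : Euc m → ℝ≥0∞ := fun y => ENNReal.ofReal (1 + ‖y‖^2) with hw
  have hwm : Measurable w := (measurable_const.add (measurable_norm.pow_const 2)).ennreal_ofReal
  have hw0 : ∀ y, w y ≠ 0 := fun y => by
    simp only [hw, ne_eq, ENNReal.ofReal_eq_zero, not_le]
    positivity
  have hwt : ∀ y, w y ≠ ⊤ := fun _ => ENNReal.ofReal_ne_top
  have hum : Measurable fun y : Euc m => (‖u (join m k y z)‖₊ : ℝ≥0∞) :=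
    (hu.comp ((mp_join m k).measurable.comp (measurable_id.prodMk measurable_const))).nnnorm.coe_nnreal_ennreal
  set f : Euc m → ℝ≥0∞ := fun y => (w y)⁻¹ ^ (1/2:ℝ) * ‖u (join m k y z)‖₊ with hf
  set g : Euc m → ℝ≥0∞ := fun y => (w y) ^ (1/2:ℝ) * ‖φ y‖₊ with hg
  have hfm : Measurable f :=
    ((ENNReal.continuous_rpow_const.measurable).comp hwm.inv).mul hum
  have hgm : Measurable g :=
    ((ENNReal.continuous_rpow_const.measurable).comp hwm).mul hφ.nnnorm.coe_nnreal_ennreal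
  have hpq : Real.HolderConjugate 2 2 := Real.HolderConjugate.two_two
  have key := ENNReal.lintegral_mul_le_Lp_mul_Lq volume hpq hfm.aemeasurable hgm.aemeasurable
  have hfg : ∀ y, (f * g) y = (‖u (join m k y z)‖₊ : ℝ≥0∞) * ‖φ y‖₊ := by
    intro y
    have hone : (w y)⁻¹ ^ (1/2:ℝ) * (w y) ^ (1/2:ℝ) = 1 := by
      rw [← ENNReal.mul_rpow_of_nonneg _ _ (by norm_num),
        ENNReal.inv_mul_cancel (hw0 y) (hwt y), ENNReal.one_rpow]
    calc (f * g) y = ((w y)⁻¹ ^ (1/2:ℝ) * (w y) ^ (1/2:ℝ))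
          * ((‖u (join m k y z)‖₊ : ℝ≥0∞) * ‖φ y‖₊) := by
          simp only [Pi.mul_apply, hf, hg]; ring
      _ = (‖u (join m k y z)‖₊ : ℝ≥0∞) * ‖φ y‖₊ := by rw [hone, one_mul]
  have hf2 : ∀ y, f y ^ (2:ℝ) = (w y)⁻¹ * (‖u (join m k y z)‖₊:ℝ≥0∞)^(2:ℝ) := by
    intro y
    rw [hf]
    rw [ENNReal.mul_rpow_of_nonneg _ _ (by norm_num : (0:ℝ) ≤ 2), ← ENNReal.rpow_mul]
    norm_num
  have hg2 : ∀ y, g y ^ (2:ℝ) = w y * (‖φ y‖₊:ℝ≥0∞)^2 := by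
    intro y
    rw [hg]
    rw [ENNReal.mul_rpow_of_nonneg _ _ (by norm_num : (0:ℝ) ≤ 2), ← ENNReal.rpow_mul]
    norm_num
  calc ∫⁻ y : Euc m, (‖u (join m k y z)‖₊ : ℝ≥0∞) * ‖φ y‖₊
      = ∫⁻ y, (f * g) y := by
        refine lintegral_congr fun y => (hfg y).symm
    _ ≤ (∫⁻ y, f y ^ (2:ℝ)) ^ (1/2:ℝ) * (∫⁻ y, g y ^ (2:ℝ)) ^ (1/2:ℝ) := key
    _ = _ := by
        congr 1
        · congr 1
          exact lintegral_congr fun y => hf2 y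
        · congr 1
          exact lintegral_congr fun y => hg2 y

lemma key_double (m k : ℕ) (hm : 1 ≤ m) (u : Euc (m+k) → ℂ) (hu : Measurable u) (i j : ℕ) :
    ∫⁻ z in AHshell k j, ∫⁻ y in AHshell m i, (‖u (join m k y z)‖₊:ℝ≥0∞)^(2:ℝ)
      ≤ 3 * 2^(max i j) * (BStarNorm (m+k) u)^(2:ℝ) := by
  haveI : Nontrivial (Euc (m+k)) := euc_nontrivial (m+k) (by omega)
  set ℓ := max i j with hℓ
  set F : Euc (m+k) → ℝ≥0∞ := fun x => (‖u x‖₊:ℝ≥0∞)^(2:ℝ) with hFdef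
  have hFm : Measurable F := ENNReal.continuous_rpow_const.measurable.comp hu.nnnorm.coe_nnreal_ennreal
  set T : Set (Euc (m+k)) :=
    (AHshell (m+k) ℓ ∪ AHshell (m+k) (ℓ+1)) ∪ sphere (0 : Euc (m+k)) (2 ^ ℓ) with hT
  have hTm : MeasurableSet T :=
    (((measurableSet_AHshell _ _).union (measurableSet_AHshell _ _)).union isClosed_sphere.measurableSet)
  have hmeas : Measurable fun p : Euc k × Euc m => F (join m k p.2 p.1) :=
    hFm.comp ((mp_join m k).measurable.comp (measurable_snd.prodMk measurable_fst))
  calc ∫⁻ z in AHshell k j, ∫⁻ y in AHshell m i, F (join m k y z)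
      = ∫⁻ p, F (join m k p.2 p.1)
        ∂((volume.restrict (AHshell k j)).prod (volume.restrict (AHshell m i))) :=
        (lintegral_prod _ hmeas.aemeasurable).symm
    _ = ∫⁻ p in (AHshell k j) ×ˢ (AHshell m i), F (join m k p.2 p.1)
        ∂((volume : Measure (Euc k)).prod (volume : Measure (Euc m))) := by
        rw [Measure.prod_restrict]
    _ = ∫⁻ p, ((AHshell k j ×ˢ AHshell m i).indicator
          (fun p : Euc k × Euc m => F (join m k p.2 p.1))) p
        ∂((volume : Measure (Euc k)).prod (volume : Measure (Euc m))) :=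
        (lintegral_indicator
          ((measurableSet_AHshell k j).prod (measurableSet_AHshell m i)) _).symm
    _ ≤ ∫⁻ p : Euc k × Euc m, (T.indicator F) (join m k p.2 p.1)
        ∂((volume : Measure (Euc k)).prod (volume : Measure (Euc m))) := by
        refine lintegral_mono fun p => ?_
        by_cases hp : p ∈ AHshell k j ×ˢ AHshell m i
        · rw [Set.indicator_of_mem hp, Set.indicator_of_mem (join_mem_target hp.2 hp.1)]
        · rw [Set.indicator_of_notMem hp]; exact zero_le
    _ = ∫⁻ q : Euc m × Euc k, (T.indicator F) (join m k q.1 q.2)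
        ∂((volume : Measure (Euc m)).prod (volume : Measure (Euc k))) :=
        (Measure.measurePreserving_swap).lintegral_comp
          ((hFm.indicator hTm).comp (mp_join m k).measurable)
    _ = ∫⁻ x, (T.indicator F) x := (mp_join m k).lintegral_comp (hFm.indicator hTm)
    _ = ∫⁻ x in T, F x := lintegral_indicator hTm F
    _ ≤ (∫⁻ x in AHshell (m+k) ℓ ∪ AHshell (m+k) (ℓ+1), F x)
        + ∫⁻ x in sphere (0 : Euc (m+k)) (2 ^ ℓ), F x := lintegral_union_le _ _ _
    _ ≤ ((∫⁻ x in AHshell (m+k) ℓ, F x) + ∫⁻ x in AHshell (m+k) (ℓ+1), F x) + 0 := by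
        refine add_le_add (lintegral_union_le _ _ _) ?_
        rw [setLIntegral_measure_zero _ _ (Measure.addHaar_sphere volume 0 _)]
    _ ≤ (2 ^ ℓ * (BStarNorm (m+k) u)^(2:ℝ) + 2 ^ (ℓ+1) * (BStarNorm (m+k) u)^(2:ℝ)) + 0 :=
        add_le_add (add_le_add (shell_S_le (m+k) ℓ u) (shell_S_le (m+k) (ℓ+1) u)) le_rfl
    _ = 3 * 2^ℓ * (BStarNorm (m+k) u)^(2:ℝ) := by rw [pow_succ]; ring

lemma H_measurable (m k : ℕ) (u : Euc (m+k) → ℂ) (hu : Measurable u) :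
    Measurable fun z : Euc k =>
      ∫⁻ y : Euc m, (ENNReal.ofReal (1 + ‖y‖^2))⁻¹ * (‖u (join m k y z)‖₊:ℝ≥0∞)^(2:ℝ) := by
  have hwm : Measurable fun y : Euc m => ENNReal.ofReal (1 + ‖y‖^2) :=
    (measurable_const.add (measurable_norm.pow_const 2)).ennreal_ofReal
  have hFm : Measurable fun x : Euc (m+k) => (‖u x‖₊:ℝ≥0∞)^(2:ℝ) :=
    ENNReal.continuous_rpow_const.measurable.comp hu.nnnorm.coe_nnreal_ennreal
  exact Measurable.lintegral_prod_right
    ((hwm.inv.comp measurable_snd).mul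
      (hFm.comp ((mp_join m k).measurable.comp (measurable_snd.prodMk measurable_fst))))

lemma H_bound (m k : ℕ) (hm : 1 ≤ m) (u : Euc (m+k) → ℂ) (hu : Measurable u) (j : ℕ) :
    ∫⁻ z in AHshell k j,
        ∫⁻ y : Euc m, (ENNReal.ofReal (1 + ‖y‖^2))⁻¹ * (‖u (join m k y z)‖₊:ℝ≥0∞)^(2:ℝ)
      ≤ 24 * 2^j * (BStarNorm (m+k) u)^(2:ℝ) := by
  have hFm : Measurable fun x : Euc (m+k) => (‖u x‖₊:ℝ≥0∞)^(2:ℝ) :=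
    ENNReal.continuous_rpow_const.measurable.comp hu.nnnorm.coe_nnreal_ennreal
  have hydecomp : ∀ z : Euc k,
      (∫⁻ y : Euc m, (ENNReal.ofReal (1 + ‖y‖^2))⁻¹ * (‖u (join m k y z)‖₊:ℝ≥0∞)^(2:ℝ))
      ≤ ∑' i : ℕ, ∫⁻ y in AHshell m i,
          (ENNReal.ofReal (1 + ‖y‖^2))⁻¹ * (‖u (join m k y z)‖₊:ℝ≥0∞)^(2:ℝ) := by
    intro z
    have hs : MeasurableSet (⋃ i, AHshell m i) :=
      MeasurableSet.iUnion fun i => measurableSet_AHshell m i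
    calc (∫⁻ y : Euc m, (ENNReal.ofReal (1 + ‖y‖^2))⁻¹ * (‖u (join m k y z)‖₊:ℝ≥0∞)^(2:ℝ))
        = (∫⁻ y in ⋃ i, AHshell m i,
            (ENNReal.ofReal (1 + ‖y‖^2))⁻¹ * (‖u (join m k y z)‖₊:ℝ≥0∞)^(2:ℝ))
          + ∫⁻ y in (⋃ i, AHshell m i)ᶜ,
            (ENNReal.ofReal (1 + ‖y‖^2))⁻¹ * (‖u (join m k y z)‖₊:ℝ≥0∞)^(2:ℝ) :=
          (lintegral_add_compl _ hs).symm
      _ = ∫⁻ y in ⋃ i, AHshell m i,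
            (ENNReal.ofReal (1 + ‖y‖^2))⁻¹ * (‖u (join m k y z)‖₊:ℝ≥0∞)^(2:ℝ) := by
          rw [setLIntegral_measure_zero _ _ (compl_iUnion_AHshell_null m hm), add_zero]
      _ ≤ ∑' i : ℕ, ∫⁻ y in AHshell m i,
            (ENNReal.ofReal (1 + ‖y‖^2))⁻¹ * (‖u (join m k y z)‖₊:ℝ≥0∞)^(2:ℝ) :=
          lintegral_iUnion_le _ _
  have hshell : ∀ i : ℕ,
      (∫⁻ z in AHshell k j, ∫⁻ y in AHshell m i,
          (ENNReal.ofReal (1 + ‖y‖^2))⁻¹ * (‖u (join m k y z)‖₊:ℝ≥0∞)^(2:ℝ))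
      ≤ (4 * ((2:ℝ≥0∞) ^ (2*i))⁻¹) * 2^(max i j) * (3 * (BStarNorm (m+k) u)^(2:ℝ)) := by
    intro i
    have hcfin : (4 * ((2:ℝ≥0∞) ^ (2*i))⁻¹) ≠ ⊤ := by
      refine ENNReal.mul_ne_top (by norm_num) ?_
      simp [ENNReal.inv_ne_top, pow_ne_zero _ (by norm_num : (2:ℝ≥0∞) ≠ 0)]
    calc (∫⁻ z in AHshell k j, ∫⁻ y in AHshell m i,
            (ENNReal.ofReal (1 + ‖y‖^2))⁻¹ * (‖u (join m k y z)‖₊:ℝ≥0∞)^(2:ℝ))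
        ≤ ∫⁻ z in AHshell k j, ∫⁻ y in AHshell m i,
            (4 * ((2:ℝ≥0∞) ^ (2*i))⁻¹) * (‖u (join m k y z)‖₊:ℝ≥0∞)^(2:ℝ) := by
          refine lintegral_mono fun z => ?_
          refine setLIntegral_mono' (measurableSet_AHshell m i) fun y hy => ?_
          exact mul_le_mul_left (weight_inv_le hy) _
      _ = (4 * ((2:ℝ≥0∞) ^ (2*i))⁻¹) * ∫⁻ z in AHshell k j, ∫⁻ y in AHshell m i,
            (‖u (join m k y z)‖₊:ℝ≥0∞)^(2:ℝ) := by
          rw [← lintegral_const_mul' _ _ hcfin]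
          exact lintegral_congr fun z => lintegral_const_mul' _ _ hcfin
      _ ≤ (4 * ((2:ℝ≥0∞) ^ (2*i))⁻¹) * (3 * 2^(max i j) * (BStarNorm (m+k) u)^(2:ℝ)) :=
          mul_le_mul_right (key_double m k hm u hu i j) _
      _ = (4 * ((2:ℝ≥0∞) ^ (2*i))⁻¹) * 2^(max i j) * (3 * (BStarNorm (m+k) u)^(2:ℝ)) := by
          ring
  calc (∫⁻ z in AHshell k j,
          ∫⁻ y : Euc m, (ENNReal.ofReal (1 + ‖y‖^2))⁻¹ * (‖u (join m k y z)‖₊:ℝ≥0∞)^(2:ℝ))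
      ≤ ∫⁻ z in AHshell k j, ∑' i : ℕ, ∫⁻ y in AHshell m i,
          (ENNReal.ofReal (1 + ‖y‖^2))⁻¹ * (‖u (join m k y z)‖₊:ℝ≥0∞)^(2:ℝ) :=
        lintegral_mono hydecomp
    _ = ∑' i : ℕ, ∫⁻ z in AHshell k j, ∫⁻ y in AHshell m i,
          (ENNReal.ofReal (1 + ‖y‖^2))⁻¹ * (‖u (join m k y z)‖₊:ℝ≥0∞)^(2:ℝ) := by
        refine lintegral_tsum fun i => Measurable.aemeasurable ?_
        have hwm : Measurable fun y : Euc m => ENNReal.ofReal (1 + ‖y‖^2) :=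
          (measurable_const.add (measurable_norm.pow_const 2)).ennreal_ofReal
        exact Measurable.lintegral_prod_right
          ((hwm.inv.comp measurable_snd).mul
            (hFm.comp ((mp_join m k).measurable.comp (measurable_snd.prodMk measurable_fst))))
    _ ≤ ∑' i : ℕ, (4 * ((2:ℝ≥0∞) ^ (2*i))⁻¹) * 2^(max i j) * (3 * (BStarNorm (m+k) u)^(2:ℝ)) :=
        ENNReal.tsum_le_tsum hshell
    _ = (∑' i : ℕ, (4 * ((2:ℝ≥0∞) ^ (2*i))⁻¹) * 2^(max i j)) * (3 * (BStarNorm (m+k) u)^(2:ℝ)) :=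
        ENNReal.tsum_mul_right
    _ ≤ (8 * 2^j) * (3 * (BStarNorm (m+k) u)^(2:ℝ)) := mul_le_mul_left (csum_le j) _
    _ = 24 * 2^j * (BStarNorm (m+k) u)^(2:ℝ) := by ring

/-- pairing a `B*` function on `ℝ^{m+k}` with a weighted-`L²`
function of the first group of variables produces a `B*` function of the
remaining variables, with a constant depending only on `m, k`. -/
theorem stmt1 (m k : ℕ) (hm : 1 ≤ m) (hk : 1 ≤ k) :
    ∃ C : ℝ, 0 < C ∧
      ∀ (u : Euc (m + k) → ℂ) (φ : Euc m → ℂ), Measurable u → Measurable φ →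
        BStarNorm (m + k) u < ⊤ →
        (∫⁻ y : Euc m, ENNReal.ofReal (1 + ‖y‖ ^ 2) * (‖φ y‖₊ : ℝ≥0∞) ^ 2) < ⊤ →
        (∀ᵐ z : Euc k, Integrable (fun y : Euc m => u (join m k y z) * (starRingEnd ℂ) (φ y))) ∧
          BStarNorm k (fun z => ∫ y : Euc m, u (join m k y z) * (starRingEnd ℂ) (φ y)) ≤
            ENNReal.ofReal C *
              (∫⁻ y : Euc m, ENNReal.ofReal (1 + ‖y‖ ^ 2) * (‖φ y‖₊ : ℝ≥0∞) ^ 2) ^ (1/2 : ℝ) *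
              BStarNorm (m + k) u := by
  refine ⟨5, by norm_num, ?_⟩
  intro u φ hu hφ hU hM2
  have hHm := H_measurable m k u hu
  have hHb := fun j : ℕ => H_bound m k hm u hu j
  have hUfin : (BStarNorm (m+k) u) ^ (2:ℝ) ≠ ⊤ :=
    (ENNReal.rpow_lt_top_of_nonneg (by norm_num) hU.ne).ne
  have hHfin : ∀ᵐ z : Euc k,
      (∫⁻ y : Euc m, (ENNReal.ofReal (1 + ‖y‖^2))⁻¹ * (‖u (join m k y z)‖₊:ℝ≥0∞)^(2:ℝ)) < ⊤ := by
    have hae : ∀ j : ℕ, ∀ᵐ z : Euc k, z ∈ AHshell k j →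
        (∫⁻ y : Euc m, (ENNReal.ofReal (1 + ‖y‖^2))⁻¹ * (‖u (join m k y z)‖₊:ℝ≥0∞)^(2:ℝ)) < ⊤ := by
      intro j
      refine ae_imp_of_ae_restrict (ae_lt_top hHm ?_)
      refine ((hHb j).trans_lt ?_).ne
      exact ENNReal.mul_lt_top
        (ENNReal.mul_lt_top (by norm_num) (ENNReal.pow_lt_top (by norm_num)))
        (lt_top_iff_ne_top.mpr hUfin)
    filter_upwards [ae_mem_iUnion_AHshell k hk, ae_all_iff.mpr hae] with z hz hall
    rcases mem_iUnion.mp hz with ⟨j, hj⟩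
    exact hall j hj
  have hGle : ∀ z : Euc k,
      (∫⁻ y : Euc m, (‖u (join m k y z) * (starRingEnd ℂ) (φ y)‖₊ : ℝ≥0∞))
      ≤ (∫⁻ y : Euc m, (ENNReal.ofReal (1 + ‖y‖^2))⁻¹ * (‖u (join m k y z)‖₊:ℝ≥0∞)^(2:ℝ)) ^ (1/2:ℝ)
        * (∫⁻ y : Euc m, ENNReal.ofReal (1 + ‖y‖^2) * (‖φ y‖₊:ℝ≥0∞)^2) ^ (1/2:ℝ) := by
    intro z
    refine le_trans (le_of_eq (lintegral_congr fun y => ?_)) (holder_step m k u φ hu hφ z)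
    rw [nnnorm_mul, ENNReal.coe_mul]
    congr 2
    rw [starRingEnd_apply, nnnorm_star]
  have hM2half : ((∫⁻ y : Euc m, ENNReal.ofReal (1 + ‖y‖^2) * (‖φ y‖₊:ℝ≥0∞)^2) ^ (1/2:ℝ)) ≠ ⊤ :=
    (ENNReal.rpow_lt_top_of_nonneg (by norm_num) hM2.ne).ne
  constructor
  · filter_upwards [hHfin] with z hz
    constructor
    · exact ((hu.comp ((mp_join m k).measurable.comp
        (measurable_id.prodMk measurable_const))).mul
        (RCLike.continuous_conj.measurable.comp hφ)).aestronglyMeasurable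
    · show (∫⁻ y : Euc m, (‖u (join m k y z) * (starRingEnd ℂ) (φ y)‖₊ : ℝ≥0∞)) < ⊤
      refine lt_of_le_of_lt (hGle z) ?_
      exact ENNReal.mul_lt_top
        (ENNReal.rpow_lt_top_of_nonneg (by norm_num) hz.ne)
        (lt_top_iff_ne_top.mpr hM2half)
  · rw [BStarNorm]
    refine iSup_le fun j => ?_
    set v : Euc k → ℂ := fun z => ∫ y : Euc m, u (join m k y z) * (starRingEnd ℂ) (φ y) with hv
    set M2 := ∫⁻ y : Euc m, ENNReal.ofReal (1 + ‖y‖ ^ 2) * (‖φ y‖₊ : ℝ≥0∞) ^ 2 with hM2def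
    set U := BStarNorm (m+k) u with hUdef
    have hvz : ∀ z : Euc k, (‖v z‖₊ : ℝ≥0∞)
        ≤ (∫⁻ y : Euc m, (ENNReal.ofReal (1 + ‖y‖^2))⁻¹ * (‖u (join m k y z)‖₊:ℝ≥0∞)^(2:ℝ)) ^ (1/2:ℝ)
          * M2 ^ (1/2:ℝ) :=
      fun z => (enorm_integral_le_lintegral_enorm _).trans (hGle z)
    have hvz2 : ∀ z : Euc k, (‖v z‖₊ : ℝ≥0∞) ^ (2:ℝ)
        ≤ (∫⁻ y : Euc m, (ENNReal.ofReal (1 + ‖y‖^2))⁻¹ * (‖u (join m k y z)‖₊:ℝ≥0∞)^(2:ℝ)) * M2 := by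
      intro z
      refine le_trans (ENNReal.rpow_le_rpow (hvz z) (by norm_num : (0:ℝ) ≤ 2)) (le_of_eq ?_)
      rw [ENNReal.mul_rpow_of_nonneg _ _ (by norm_num : (0:ℝ) ≤ 2),
        ← ENNReal.rpow_mul, ← ENNReal.rpow_mul]
      norm_num
    set Tj := ∫⁻ z in AHshell k j, (‖v z‖₊ : ℝ≥0∞) ^ (2:ℝ) with hTjdef
    have hTj : Tj ≤ (24 * 2^j * U^(2:ℝ)) * M2 := by
      calc Tj ≤ ∫⁻ z in AHshell k j,
            (∫⁻ y : Euc m, (ENNReal.ofReal (1 + ‖y‖^2))⁻¹ * (‖u (join m k y z)‖₊:ℝ≥0∞)^(2:ℝ)) * M2 :=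
            lintegral_mono fun z => hvz2 z
        _ = (∫⁻ z in AHshell k j,
            ∫⁻ y : Euc m, (ENNReal.ofReal (1 + ‖y‖^2))⁻¹ * (‖u (join m k y z)‖₊:ℝ≥0∞)^(2:ℝ)) * M2 :=
            lintegral_mul_const' _ _ hM2.ne
        _ ≤ (24 * 2^j * U^(2:ℝ)) * M2 := mul_le_mul_left (hHb j) _
    have he : eLpNorm v 2 (volume.restrict (AHshell k j)) = Tj ^ (1/2:ℝ) := by
      rw [eLpNorm_eq_lintegral_rpow_enorm_toReal (by norm_num) (by norm_num)]
      norm_num [hTjdef, enorm_eq_nnnorm]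
    rw [he]
    have hU2 : (U ^ (2:ℝ)) ^ (1/2:ℝ) = U := by
      rw [← ENNReal.rpow_mul]; norm_num
    calc (2:ℝ≥0∞) ^ (-(j:ℝ)/2) * Tj ^ (1/2:ℝ)
        ≤ (2:ℝ≥0∞) ^ (-(j:ℝ)/2) * ((24 * 2^j * U^(2:ℝ)) * M2) ^ (1/2:ℝ) :=
          mul_le_mul_right (ENNReal.rpow_le_rpow hTj (by norm_num)) _
      _ = (24:ℝ≥0∞)^(1/2:ℝ) * M2^(1/2:ℝ) * U * ((2:ℝ≥0∞) ^ (-(j:ℝ)/2) * ((2:ℝ≥0∞)^j)^(1/2:ℝ)) := by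
          rw [ENNReal.mul_rpow_of_nonneg _ _ (by norm_num : (0:ℝ) ≤ 1/2),
            ENNReal.mul_rpow_of_nonneg _ _ (by norm_num : (0:ℝ) ≤ 1/2),
            ENNReal.mul_rpow_of_nonneg _ _ (by norm_num : (0:ℝ) ≤ 1/2), hU2]
          ring
      _ = (24:ℝ≥0∞)^(1/2:ℝ) * M2^(1/2:ℝ) * U := by
          rw [show ((2:ℝ≥0∞)^j)^(1/2:ℝ) = (2:ℝ≥0∞)^((j:ℝ)/2) by
              rw [← ENNReal.rpow_natCast 2 j, ← ENNReal.rpow_mul]; congr 1; ring,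
            ← ENNReal.rpow_add _ _ (by norm_num) (by norm_num),
            show -(j:ℝ)/2 + (j:ℝ)/2 = 0 by ring, ENNReal.rpow_zero, mul_one]
      _ ≤ ENNReal.ofReal 5 * M2^(1/2:ℝ) * U := by
          refine mul_le_mul_left (mul_le_mul_left ?_ _) _
          rw [ENNReal.ofReal_ofNat]
          calc (24:ℝ≥0∞)^(1/2:ℝ) ≤ (25:ℝ≥0∞)^(1/2:ℝ) :=
                ENNReal.rpow_le_rpow (by norm_num) (by norm_num)
            _ = 5 := by
                rw [show (25:ℝ≥0∞) = 5^(2:ℕ) by norm_num, ← ENNReal.rpow_natCast,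
                  ← ENNReal.rpow_mul]
                norm_num
end
end

section
/- Let n ∈ ℕ, μ ∈ (0,1], let V be a potential of long-range order μ on ℝ^n, let Y be an eikonal phase for V, and set K(x,λ) := √λ |x| − Y(x,λ). Suppose x_+(ξ,t), λ_+(ξ,t) ∈ C^∞((ℝ^n∖{0}) × (0,∞)) and x_−(ξ,t), λ_−(ξ,t) ∈ C^∞((ℝ^n∖{0}) × (−∞,0)) with λ_± > 0 are such that for every compact A ⊂ ℝ^n∖{0} there exist T, C > 0 with, for all ξ ∈ A and ±t > T: ξ = ±∇_x K(x_±, λ_±), t = ±∂_λ K(x_±, λ_±), |x_± − 2ξt| ≤ C(1+|t|)^{1-μ}, and |λ_± − |ξ|²| ≤ C(1+|t|)^{-μ} (arguments (ξ,t) suppressed). Define S_±(ξ,t) := x_±(ξ,t)·ξ + λ_±(ξ,t) t ∓ K(x_±(ξ,t), λ_±(ξ,t)). Then for every compact A ⊂ ℝ^n∖{0} there exists T > 0 such that for all ξ ∈ A and ±t > T: ∇_ξ S_±(ξ,t) = x_±(ξ,t), ∂_t S_±(ξ,t) = λ_±(ξ,t), and S_± solves the Hamilton–Jacobi equation ∂_t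 S_±(ξ,t) = |ξ|² + V(∇_ξ S_±(ξ,t)). -/
open MeasureTheory Metric Filter
open scoped ENNReal RealInnerProductSpace Topology

noncomputable section

/-- A potential of long-range order `μ` on `ℝ^n`: smooth, with
`‖∂^γ V(x)‖ ≤ C (1+|x|)^{-μ-|γ|}` for every order of derivative. -/
def IsLongRangePotential (n : ℕ) (μ : ℝ) (V : Euc n → ℝ) : Prop :=
  ContDiff ℝ (⊤ : ℕ∞) V ∧
    ∀ i : ℕ, ∃ C > 0, ∀ x : Euc n, ‖iteratedFDeriv ℝ i V x‖ ≤ C * (1 + ‖x‖) ^ (-μ - (i : ℝ))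

/-- An eikonal phase `Y` for a long-range potential `V` of order `μ`:
smooth on `ℝ^n × (0,∞)`, solving `2√λ ∂_r Y = |∇_x Y|² + V` for `|x|` large
(locally uniformly in `λ`), with symbol-type bounds
`|∂_x^α ∂_λ^k Y| ≤ C (1+|x|)^{1-|α|-μ}`. -/
def IsEikonalPhase (n : ℕ) (μ : ℝ) (V : Euc n → ℝ) (Y : Euc n → ℝ → ℝ) : Prop :=
  ContDiffOn ℝ (⊤ : ℕ∞) (fun p : Euc n × ℝ => Y p.1 p.2) (Set.univ ×ˢ Set.Ioi 0) ∧
  (∀ Λ : Set ℝ, IsCompact Λ → Λ ⊆ Set.Ioi 0 → ∃ R₀ > 0, ∀ x : Euc n, ∀ lam ∈ Λ, R₀ < ‖x‖ →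
      2 * Real.sqrt lam * (⟪x, gradient (fun y => Y y lam) x⟫ / ‖x‖)
        = ‖gradient (fun y => Y y lam) x‖ ^ 2 + V x) ∧
  (∀ (a k : ℕ) (Λ : Set ℝ), IsCompact Λ → Λ ⊆ Set.Ioi 0 → ∃ C > 0,
      ∀ x : Euc n, ∀ lam ∈ Λ,
      ‖iteratedFDeriv ℝ a (fun y => iteratedDerivWithin k (fun l => Y y l) (Set.Ioi 0) lam) x‖
        ≤ C * (1 + ‖x‖) ^ (1 - (a : ℝ) - μ))

/-- `K(x,λ) = √λ |x| − Y(x,λ)`. -/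
def Kfun (n : ℕ) (Y : Euc n → ℝ → ℝ) (lam : ℝ) (x : Euc n) : ℝ :=
  Real.sqrt lam * ‖x‖ - Y x lam

/-- The Legendre transform `S_+(ξ,t) = x_+·ξ + λ_+ t − K(x_+, λ_+)`. -/
def SPlus (n : ℕ) (Y : Euc n → ℝ → ℝ) (xp : Euc n → ℝ → Euc n) (lamp : Euc n → ℝ → ℝ)
    (ξ : Euc n) (t : ℝ) : ℝ :=
  ⟪xp ξ t, ξ⟫ + lamp ξ t * t - Kfun n Y (lamp ξ t) (xp ξ t)

/-- The Legendre transform `S_−(ξ,t) = x_−·ξ + λ_− t + K(x_−, λ_−)`. -/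
def SMinus (n : ℕ) (Y : Euc n → ℝ → ℝ) (xm : Euc n → ℝ → Euc n) (lamm : Euc n → ℝ → ℝ)
    (ξ : Euc n) (t : ℝ) : ℝ :=
  ⟪xm ξ t, ξ⟫ + lamm ξ t * t + Kfun n Y (lamm ξ t) (xm ξ t)


open InnerProductSpace

lemma myHasGradientAt_neg {n : ℕ} {f : Euc n → ℝ} {g x : Euc n}
    (h : HasGradientAt f g x) : HasGradientAt (fun y => -(f y)) (-g) x := by
  have h2 := h.hasFDerivAt.neg
  have h3 : -(toDual ℝ (Euc n) g) = toDual ℝ (Euc n) (-g) := (map_neg _ g).symm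
  rw [h3] at h2
  exact (hasGradientAt_iff_hasFDerivAt).mpr h2

lemma myHasFDerivAt_norm {n : ℕ} {x : Euc n} (hx : x ≠ 0) :
    HasFDerivAt (fun y : Euc n => ‖y‖) (toDual ℝ (Euc n) (‖x‖⁻¹ • x)) x := by
  have hin : HasFDerivAt (fun y : Euc n => ⟪y, y⟫)
      ((fderivInnerCLM ℝ (x, x)).comp
        ((ContinuousLinearMap.id ℝ (Euc n)).prod (ContinuousLinearMap.id ℝ (Euc n)))) x :=
    (hasFDerivAt_id x).inner ℝ (hasFDerivAt_id x)
  have hq : (⟪x, x⟫ : ℝ) ≠ 0 := by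
    rw [real_inner_self_eq_norm_sq]; exact pow_ne_zero 2 (norm_ne_zero_iff.mpr hx)
  have hs : HasDerivAt Real.sqrt (1 / (2 * Real.sqrt ⟪x, x⟫)) ⟪x, x⟫ :=
    Real.hasDerivAt_sqrt hq
  have hcomp := hs.comp_hasFDerivAt (f := fun y : Euc n => ⟪y, y⟫) x hin
  have hfun : (fun y : Euc n => Real.sqrt ⟪y, y⟫) = fun y : Euc n => ‖y‖ := by
    funext y; rw [real_inner_self_eq_norm_sq, Real.sqrt_sq (norm_nonneg y)]
  simp only [Function.comp_def] at hcomp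
  rw [hfun] at hcomp
  have hnx : (0:ℝ) < ‖x‖ := norm_pos_iff.mpr hx
  refine hcomp.congr_fderiv (Eq.symm ?_)
  ext u
  have h1 : Real.sqrt ⟪x, x⟫ = ‖x‖ := by
    rw [real_inner_self_eq_norm_sq, Real.sqrt_sq (norm_nonneg x)]
  simp only [ContinuousLinearMap.smul_apply, ContinuousLinearMap.comp_apply,
    ContinuousLinearMap.prod_apply, ContinuousLinearMap.coe_id', id_eq,
    fderivInnerCLM_apply, toDual_apply_apply, h1, smul_eq_mul]
  rw [real_inner_smul_left, real_inner_comm u x]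
  field_simp
  ring

lemma myKsliceGrad {n : ℕ} {Y : Euc n → ℝ → ℝ}
    (hY1 : ContDiffOn ℝ (⊤ : ℕ∞) (fun p : Euc n × ℝ => Y p.1 p.2) (Set.univ ×ˢ Set.Ioi 0))
    {x : Euc n} (hx : x ≠ 0) {lam : ℝ} (hl : 0 < lam) :
    HasGradientAt (fun y => Kfun n Y lam y)
      (Real.sqrt lam • (‖x‖⁻¹ • x) - gradient (fun y => Y y lam) x) x := by
  have hJ : ContDiffAt ℝ (⊤ : ℕ∞) (fun p : Euc n × ℝ => Y p.1 p.2) (x, lam) :=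
    hY1.contDiffAt ((isOpen_univ.prod isOpen_Ioi).mem_nhds
      (Set.mk_mem_prod (Set.mem_univ _) hl))
  have hYs : DifferentiableAt ℝ (fun y => Y y lam) x :=
    ((hJ.comp x (contDiffAt_id.prodMk contDiffAt_const)).differentiableAt
      (by simp))
  have h1 : HasFDerivAt (fun y : Euc n => Real.sqrt lam * ‖y‖)
      (Real.sqrt lam • toDual ℝ (Euc n) (‖x‖⁻¹ • x)) x := (myHasFDerivAt_norm hx).const_mul _
  have h2 : HasFDerivAt (fun y => Y y lam)
      (toDual ℝ (Euc n) (gradient (fun y => Y y lam) x)) x := hYs.hasGradientAt.hasFDerivAt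
  have h3 := h1.sub h2
  have he : Real.sqrt lam • toDual ℝ (Euc n) (‖x‖⁻¹ • x)
        - toDual ℝ (Euc n) (gradient (fun y => Y y lam) x)
      = toDual ℝ (Euc n) (Real.sqrt lam • (‖x‖⁻¹ • x) - gradient (fun y => Y y lam) x) := by
    simp only [map_sub, _root_.map_smul]
  rw [he] at h3
  exact (hasGradientAt_iff_hasFDerivAt).mpr h3

lemma myEikonalK {n : ℕ} {μ : ℝ} {V : Euc n → ℝ} {Y : Euc n → ℝ → ℝ}
    (hY : IsEikonalPhase n μ V Y) {Λ : Set ℝ} (hΛc : IsCompact Λ) (hΛ : Λ ⊆ Set.Ioi 0) :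
    ∃ R₀ > 0, ∀ x : Euc n, ∀ lam ∈ Λ, R₀ < ‖x‖ →
      ‖gradient (fun y => Kfun n Y lam y) x‖ ^ 2 + V x = lam := by
  obtain ⟨R₀, hR₀, hE⟩ := hY.2.1 Λ hΛc hΛ
  refine ⟨R₀, hR₀, fun x lam hlam hxn => ?_⟩
  have hnx : (0:ℝ) < ‖x‖ := lt_trans hR₀ hxn
  have hx0 : x ≠ 0 := by
    intro h; rw [h, norm_zero] at hnx; exact lt_irrefl 0 hnx
  have hl0 : 0 < lam := hΛ hlam
  have hgr := (myKsliceGrad hY.1 hx0 hl0).gradient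
  rw [hgr]
  set gY := gradient (fun y => Y y lam) x with hgY
  have hE' := hE x lam hlam hxn
  have hν : ‖(‖x‖⁻¹ • x)‖ = 1 := by
    rw [norm_smul, Real.norm_eq_abs, abs_of_pos (inv_pos.mpr hnx), inv_mul_cancel₀ hnx.ne']
  rw [norm_sub_sq_real]
  have e1 : ‖Real.sqrt lam • (‖x‖⁻¹ • x)‖ ^ 2 = lam := by
    rw [norm_smul, Real.norm_eq_abs, abs_of_nonneg (Real.sqrt_nonneg lam), hν, mul_one]
    exact Real.sq_sqrt hl0.le
  have e2 : ⟪Real.sqrt lam • (‖x‖⁻¹ • x), gY⟫ = Real.sqrt lam * (‖x‖⁻¹ * ⟪x, gY⟫) := by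
    rw [real_inner_smul_left, real_inner_smul_left]
  have e3 : ⟪x, gY⟫ / ‖x‖ = ‖x‖⁻¹ * ⟪x, gY⟫ := by
    rw [div_eq_inv_mul]
  rw [e1, e2]
  rw [e3] at hE'
  nlinarith [hE']

lemma myKdiff {n : ℕ} {Y : Euc n → ℝ → ℝ}
    (hY1 : ContDiffOn ℝ (⊤ : ℕ∞) (fun p : Euc n × ℝ => Y p.1 p.2) (Set.univ ×ˢ Set.Ioi 0))
    {x : Euc n} (hx : x ≠ 0) {l : ℝ} (hl : 0 < l) :
    DifferentiableAt ℝ (fun p : Euc n × ℝ => Kfun n Y p.2 p.1) (x, l) := by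
  have h1 : DifferentiableAt ℝ (fun p : Euc n × ℝ => Real.sqrt p.2) (x, l) :=
    (differentiableAt_snd (p := (x, l))).sqrt hl.ne'
  have h2 : DifferentiableAt ℝ (fun p : Euc n × ℝ => ‖p.1‖) (x, l) :=
    ((contDiffAt_norm ℝ (n := 1) hx).differentiableAt one_ne_zero).comp (x, l) differentiableAt_fst
  have h3 : DifferentiableAt ℝ (fun p : Euc n × ℝ => Y p.1 p.2) (x, l) :=
    (hY1.contDiffAt ((isOpen_univ.prod isOpen_Ioi).mem_nhds
      (Set.mk_mem_prod (Set.mem_univ _) hl))).differentiableAt (by simp)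
  exact (h1.mul h2).sub h3

lemma mySliceDiff {E : Type*} [NormedAddCommGroup E] [NormedSpace ℝ E] {n : ℕ}
    {g : Euc n → ℝ → E} {s : Set (Euc n)} {t : Set ℝ} (hs : IsOpen s) (ht : IsOpen t)
    (hg : ContDiffOn ℝ (⊤ : ℕ∞) (fun p : Euc n × ℝ => g p.1 p.2) (s ×ˢ t))
    {ξ : Euc n} {τ : ℝ} (hξ : ξ ∈ s) (hτ : τ ∈ t) :
    DifferentiableAt ℝ (fun ζ => g ζ τ) ξ ∧ DifferentiableAt ℝ (fun r => g ξ r) τ := by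
  have hat : ContDiffAt ℝ (⊤ : ℕ∞) (fun p : Euc n × ℝ => g p.1 p.2) (ξ, τ) :=
    hg.contDiffAt ((hs.prod ht).mem_nhds (Set.mk_mem_prod hξ hτ))
  exact ⟨(hat.comp ξ (contDiffAt_id.prodMk contDiffAt_const)).differentiableAt
      (by simp),
    (hat.comp τ (contDiffAt_const.prodMk contDiffAt_id)).differentiableAt
      (by simp)⟩

lemma myCore {n : ℕ} (f : Euc n × ℝ → ℝ) (x : Euc n → ℝ → Euc n) (lam : Euc n → ℝ → ℝ)
    (ξ₀ : Euc n) (t₀ : ℝ)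
    (hf : DifferentiableAt ℝ f (x ξ₀ t₀, lam ξ₀ t₀))
    (hx1 : DifferentiableAt ℝ (fun ζ => x ζ t₀) ξ₀)
    (hl1 : DifferentiableAt ℝ (fun ζ => lam ζ t₀) ξ₀)
    (hx2 : DifferentiableAt ℝ (fun s => x ξ₀ s) t₀)
    (hl2 : DifferentiableAt ℝ (fun s => lam ξ₀ s) t₀)
    (hξ : ξ₀ = gradient (fun y => f (y, lam ξ₀ t₀)) (x ξ₀ t₀))
    (ht : t₀ = deriv (fun l => f (x ξ₀ t₀, l)) (lam ξ₀ t₀)) :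
    HasGradientAt (fun ζ => ⟪x ζ t₀, ζ⟫ + lam ζ t₀ * t₀ - f (x ζ t₀, lam ζ t₀)) (x ξ₀ t₀) ξ₀ ∧
    HasDerivAt (fun s => ⟪x ξ₀ s, ξ₀⟫ + lam ξ₀ s * s - f (x ξ₀ s, lam ξ₀ s)) (lam ξ₀ t₀) t₀ := by
  set x₀ := x ξ₀ t₀ with hx₀
  set l₀ := lam ξ₀ t₀ with hl₀
  set L := fderiv ℝ f (x₀, l₀) with hLdef
  have hL : HasFDerivAt f L (x₀, l₀) := hf.hasFDerivAt
  have hslice1 : HasFDerivAt (fun y => f (y, l₀))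
      (L.comp (ContinuousLinearMap.inl ℝ (Euc n) ℝ)) x₀ :=
    hL.comp x₀ (hasFDerivAt_prodMk_left x₀ l₀)
  have hslice2 : HasFDerivAt (fun l => f (x₀, l))
      (L.comp (ContinuousLinearMap.inr ℝ (Euc n) ℝ)) l₀ :=
    hL.comp l₀ (hasFDerivAt_prodMk_right x₀ l₀)
  have key1 : ∀ u : Euc n, L (u, 0) = ⟪ξ₀, u⟫ := by
    intro u
    have h2 : toDual ℝ (Euc n) ξ₀ = L.comp (ContinuousLinearMap.inl ℝ (Euc n) ℝ) := by
      rw [hξ]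
      unfold gradient
      rw [hslice1.fderiv, LinearIsometryEquiv.apply_symm_apply]
    have : (L.comp (ContinuousLinearMap.inl ℝ (Euc n) ℝ)) u = L (u, 0) := by
      simp [ContinuousLinearMap.inl_apply]
    rw [← this, ← h2, toDual_apply_apply]
  have key2 : L (0, 1) = t₀ := by
    have hd := hslice2.hasDerivAt
    rw [ht, hd.deriv]
    simp [ContinuousLinearMap.inr_apply]
  have hsplit : ∀ (v : Euc n) (s : ℝ), L (v, s) = ⟪ξ₀, v⟫ + s * t₀ := by
    intro v s
    have hvs : ((v, s) : Euc n × ℝ) = (v, (0:ℝ)) + ((0 : Euc n), s) := by simp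
    have h0s : L ((0 : Euc n), s) = s * t₀ := by
      have : (((0 : Euc n), s) : Euc n × ℝ) = s • ((0 : Euc n), (1:ℝ)) := by simp
      rw [this, _root_.map_smul, key2, smul_eq_mul]
    rw [hvs, map_add, key1, h0s]
  constructor
  · have hDx := hx1.hasFDerivAt
    have hDl := hl1.hasFDerivAt
    have hA := hDx.inner ℝ (hasFDerivAt_id ξ₀)
    have hB := hDl.mul_const t₀
    have hC : HasFDerivAt (fun ζ => f (x ζ t₀, lam ζ t₀))
        (L.comp ((fderiv ℝ (fun ζ => x ζ t₀) ξ₀).prod (fderiv ℝ (fun ζ => lam ζ t₀) ξ₀))) ξ₀ :=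
      hL.comp ξ₀ (hDx.prodMk hDl)
    have htot := (hA.add hB).sub hC
    rw [hasGradientAt_iff_hasFDerivAt]
    refine htot.congr_fderiv (Eq.symm ?_)
    ext u
    simp only [ContinuousLinearMap.coe_sub', ContinuousLinearMap.coe_add', Pi.sub_apply,
      Pi.add_apply, ContinuousLinearMap.comp_apply, ContinuousLinearMap.prod_apply,
      ContinuousLinearMap.coe_id', id_eq, ContinuousLinearMap.smul_apply,
      fderivInnerCLM_apply, toDual_apply_apply, smul_eq_mul]
    rw [hsplit]
    rw [real_inner_comm (fderiv ℝ (fun ζ => x ζ t₀) ξ₀ u) ξ₀]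
    ring
  · have hdx := hx2.hasDerivAt
    have hdl := hl2.hasDerivAt
    have hA := hdx.inner ℝ (hasDerivAt_const t₀ ξ₀)
    have hB := hdl.mul (hasDerivAt_id t₀)
    have hC : HasDerivAt (fun s => f (x ξ₀ s, lam ξ₀ s))
        (L (deriv (fun s => x ξ₀ s) t₀, deriv (fun s => lam ξ₀ s) t₀)) t₀ :=
      hL.comp_hasDerivAt t₀ (hdx.prodMk hdl)
    have htot := (hA.add hB).sub hC
    refine htot.congr_deriv (Eq.symm ?_)
    rw [hsplit, inner_zero_right,
      real_inner_comm (deriv (fun s => x ξ₀ s) t₀) ξ₀]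
    simp only [id_eq]
    ring

/-- the Legendre transforms `S_±` of the eikonal phase satisfy
`∇_ξ S_± = x_±`, `∂_t S_± = λ_±`, and solve the Hamilton–Jacobi equation
`∂_t S_± = |ξ|² + V(∇_ξ S_±)` for `±t` large, uniformly on compact sets of `ξ ≠ 0`. -/
theorem stmt5 (n : ℕ) (μ : ℝ) (hμ0 : 0 < μ) (hμ1 : μ ≤ 1)
    (V : Euc n → ℝ) (hV : IsLongRangePotential n μ V)
    (Y : Euc n → ℝ → ℝ) (hY : IsEikonalPhase n μ V Y)
    (xp : Euc n → ℝ → Euc n) (lamp : Euc n → ℝ → ℝ)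
    (xm : Euc n → ℝ → Euc n) (lamm : Euc n → ℝ → ℝ)
    (hxp : ContDiffOn ℝ (⊤ : ℕ∞) (fun p : Euc n × ℝ => xp p.1 p.2)
      ({ξ : Euc n | ξ ≠ 0} ×ˢ Set.Ioi 0))
    (hlamp : ContDiffOn ℝ (⊤ : ℕ∞) (fun p : Euc n × ℝ => lamp p.1 p.2)
      ({ξ : Euc n | ξ ≠ 0} ×ˢ Set.Ioi 0))
    (hxm : ContDiffOn ℝ (⊤ : ℕ∞) (fun p : Euc n × ℝ => xm p.1 p.2)
      ({ξ : Euc n | ξ ≠ 0} ×ˢ Set.Iio 0))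
    (hlamm : ContDiffOn ℝ (⊤ : ℕ∞) (fun p : Euc n × ℝ => lamm p.1 p.2)
      ({ξ : Euc n | ξ ≠ 0} ×ˢ Set.Iio 0))
    (hposp : ∀ ξ : Euc n, ξ ≠ 0 → ∀ t : ℝ, 0 < t → 0 < lamp ξ t)
    (hposm : ∀ ξ : Euc n, ξ ≠ 0 → ∀ t : ℝ, t < 0 → 0 < lamm ξ t)
    (hasymp : ∀ A : Set (Euc n), IsCompact A → A ⊆ {ξ : Euc n | ξ ≠ 0} →
      ∃ T > 0, ∃ C > 0, ∀ ξ ∈ A,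
        (∀ t : ℝ, T < t →
          ξ = gradient (fun y => Kfun n Y (lamp ξ t) y) (xp ξ t) ∧
          t = deriv (fun l => Kfun n Y l (xp ξ t)) (lamp ξ t) ∧
          ‖xp ξ t - (2 * t) • ξ‖ ≤ C * (1 + |t|) ^ (1 - μ) ∧
          |lamp ξ t - ‖ξ‖ ^ 2| ≤ C * (1 + |t|) ^ (-μ)) ∧
        (∀ t : ℝ, t < -T →
          ξ = -gradient (fun y => Kfun n Y (lamm ξ t) y) (xm ξ t) ∧
          t = -deriv (fun l => Kfun n Y l (xm ξ t)) (lamm ξ t) ∧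
          ‖xm ξ t - (2 * t) • ξ‖ ≤ C * (1 + |t|) ^ (1 - μ) ∧
          |lamm ξ t - ‖ξ‖ ^ 2| ≤ C * (1 + |t|) ^ (-μ))) :
    ∀ A : Set (Euc n), IsCompact A → A ⊆ {ξ : Euc n | ξ ≠ 0} →
      ∃ T > 0, ∀ ξ ∈ A,
        (∀ t : ℝ, T < t →
          gradient (fun ζ => SPlus n Y xp lamp ζ t) ξ = xp ξ t ∧
          deriv (fun s => SPlus n Y xp lamp ξ s) t = lamp ξ t ∧
          deriv (fun s => SPlus n Y xp lamp ξ s) t =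
            ‖ξ‖ ^ 2 + V (gradient (fun ζ => SPlus n Y xp lamp ζ t) ξ)) ∧
        (∀ t : ℝ, t < -T →
          gradient (fun ζ => SMinus n Y xm lamm ζ t) ξ = xm ξ t ∧
          deriv (fun s => SMinus n Y xm lamm ξ s) t = lamm ξ t ∧
          deriv (fun s => SMinus n Y xm lamm ξ s) t =
            ‖ξ‖ ^ 2 + V (gradient (fun ζ => SMinus n Y xm lamm ζ t) ξ)) := by
  intro A hAc hA
  rcases A.eq_empty_or_nonempty with rfl | hne
  · exact ⟨1, one_pos, by simp⟩
  obtain ⟨T₀, hT₀, C, hC, hAs⟩ := hasymp A hAc hA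
  obtain ⟨ξmin, hξminA, hmin⟩ := hAc.exists_isMinOn hne continuous_norm.continuousOn
  obtain ⟨ξmax, hξmaxA, hmax⟩ := hAc.exists_isMaxOn hne continuous_norm.continuousOn
  set m := ‖ξmin‖ with hmdef
  set M := ‖ξmax‖ with hMdef
  have hm0 : 0 < m := norm_pos_iff.mpr (hA hξminA)
  have hmle : ∀ ξ ∈ A, m ≤ ‖ξ‖ := fun ξ h => isMinOn_iff.mp hmin ξ h
  have hMge : ∀ ξ ∈ A, ‖ξ‖ ≤ M := fun ξ h => isMaxOn_iff.mp hmax ξ h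
  set Λ := Set.Icc (m^2/2) (M^2 + C) with hΛdef
  have hΛc : IsCompact Λ := isCompact_Icc
  have hΛsub : Λ ⊆ Set.Ioi 0 := fun l hl => lt_of_lt_of_le (by positivity) hl.1
  obtain ⟨R₀, hR₀, hEik⟩ := myEikonalK hY hΛc hΛsub
  have hev1 : ∀ᶠ t : ℝ in atTop, C * (1+t) ^ (-μ) < m^2/2 := by
    have ha : Tendsto (fun t : ℝ => 1 + t) atTop atTop :=
      tendsto_atTop_add_const_left atTop 1 tendsto_id
    have h0 : Tendsto (fun t : ℝ => C * (1+t) ^ (-μ)) atTop (𝓝 0) := by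
      have := (tendsto_rpow_neg_atTop hμ0).comp ha
      simpa using this.const_mul C
    exact h0.eventually_lt_const (by positivity)
  have hev2 : ∀ᶠ t : ℝ in atTop, R₀ < 2*m*t - C*(1+t)^(1-μ) := by
    have hb : Tendsto (fun u : ℝ => 2*m - C*u^(-μ)) atTop (𝓝 (2*m)) := by
      have := (tendsto_rpow_neg_atTop hμ0).const_mul C
      simpa using tendsto_const_nhds.sub this
    have hmul : Tendsto (fun u : ℝ => (2*m - C*u^(-μ)) * u) atTop atTop :=
      hb.pos_mul_atTop (by linarith) tendsto_id
    have hmul' : Tendsto (fun u : ℝ => 2*m*u - C*u^(1-μ)) atTop atTop := by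
      apply hmul.congr'
      filter_upwards [eventually_gt_atTop (0:ℝ)] with u hu
      rw [show (1-μ : ℝ) = 1 + (-μ) by ring, Real.rpow_add hu, Real.rpow_one]
      ring
    have hcomp : Tendsto (fun t : ℝ => 2*m*(1+t) - C*(1+t)^(1-μ)) atTop atTop :=
      hmul'.comp (tendsto_atTop_add_const_left atTop 1 tendsto_id)
    have hfin : Tendsto (fun t : ℝ => 2*m*t - C*(1+t)^(1-μ)) atTop atTop := by
      have h2 := tendsto_atTop_add_const_right atTop (-(2*m)) hcomp
      exact h2.congr (fun t => by ring)
    exact hfin.eventually_gt_atTop R₀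
  obtain ⟨T₁, hT₁⟩ := Filter.eventually_atTop.mp
    ((hev1.and hev2).and ((eventually_gt_atTop T₀).and (eventually_ge_atTop (1:ℝ))))
  refine ⟨max T₁ 1, lt_of_lt_of_le one_pos (le_max_right _ _), fun ξ hξA => ⟨?_, ?_⟩⟩
  · -- plus case
    intro t ht
    obtain ⟨⟨hsmall, hgrow⟩, hT₀t, h1t⟩ := hT₁ t (le_trans (le_max_left _ _) ht.le)
    have ht0 : 0 < t := lt_of_lt_of_le one_pos h1t
    obtain ⟨hg, hd, hxb, hlb⟩ := (hAs ξ hξA).1 t hT₀t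
    have habs : |t| = t := abs_of_pos ht0
    rw [habs] at hxb hlb
    have hξm : m ≤ ‖ξ‖ := hmle ξ hξA
    have hξM : ‖ξ‖ ≤ M := hMge ξ hξA
    have hlampos : 0 < lamp ξ t := hposp ξ (hA hξA) t ht0
    have hlb2 := abs_le.mp hlb
    have hsqm : m^2 ≤ ‖ξ‖^2 := pow_le_pow_left₀ hm0.le hξm 2
    have hsqM : ‖ξ‖^2 ≤ M^2 := pow_le_pow_left₀ (norm_nonneg ξ) hξM 2
    have hrp1 : ((1+t:ℝ)) ^ (-μ) ≤ 1 :=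
      Real.rpow_le_one_of_one_le_of_nonpos (by linarith) (by linarith)
    have hCrp : C * (1+t) ^ (-μ) ≤ C := by
      have := mul_le_mul_of_nonneg_left hrp1 hC.le
      linarith
    have hlamΛ : lamp ξ t ∈ Λ := by
      constructor
      · linarith [hlb2.1, hsmall, hsqm]
      · linarith [hlb2.2, hsqM, hCrp]
    have hxlow : R₀ < ‖xp ξ t‖ := by
      have h2t : ‖((2*t) : ℝ) • ξ‖ = 2*t*‖ξ‖ := by
        rw [norm_smul, Real.norm_eq_abs, abs_of_pos (by linarith : (0:ℝ) < 2*t)]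
      have tri : ‖((2*t):ℝ) • ξ‖ - ‖xp ξ t‖ ≤ ‖xp ξ t - (2*t) • ξ‖ := by
        rw [norm_sub_rev]
        exact norm_sub_norm_le _ _
      have hmm : t*m ≤ t*‖ξ‖ := mul_le_mul_of_nonneg_left hξm ht0.le
      linarith [hgrow, hxb, tri, h2t, hmm]
    have hx0 : xp ξ t ≠ 0 := by
      intro h; rw [h, norm_zero] at hxlow; exact absurd hxlow (not_lt.mpr hR₀.le)
    have heik := hEik (xp ξ t) (lamp ξ t) hlamΛ hxlow
    rw [← hg] at heik
    have hD1 := mySliceDiff isOpen_ne isOpen_Ioi hxp (hA hξA) (ht0 : t ∈ Set.Ioi 0)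
    have hD2 := mySliceDiff isOpen_ne isOpen_Ioi hlamp (hA hξA) (ht0 : t ∈ Set.Ioi 0)
    have hKd := myKdiff hY.1 hx0 hlampos
    obtain ⟨hG, hD⟩ := myCore (fun p : Euc n × ℝ => Kfun n Y p.2 p.1) xp lamp ξ t hKd
      hD1.1 hD2.1 hD1.2 hD2.2 hg hd
    have hG' : HasGradientAt (fun ζ => SPlus n Y xp lamp ζ t) (xp ξ t) ξ := hG
    have hD' : HasDerivAt (fun s => SPlus n Y xp lamp ξ s) (lamp ξ t) t := hD
    refine ⟨hG'.gradient, hD'.deriv, ?_⟩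
    rw [hG'.gradient, hD'.deriv]
    linarith [heik]
  · -- minus case
    intro t ht
    have hsge : T₁ ≤ -t := le_trans (le_max_left _ _) (by linarith)
    obtain ⟨⟨hsmall, hgrow⟩, hT₀t, h1t⟩ := hT₁ (-t) hsge
    have ht0 : t < 0 := by linarith
    obtain ⟨hg, hd, hxb, hlb⟩ := (hAs ξ hξA).2 t (by linarith : t < -T₀)
    have habs : |t| = -t := abs_of_neg ht0
    rw [habs] at hxb hlb
    have hξm : m ≤ ‖ξ‖ := hmle ξ hξA
    have hξM : ‖ξ‖ ≤ M := hMge ξ hξA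
    have hlampos : 0 < lamm ξ t := hposm ξ (hA hξA) t ht0
    have hlb2 := abs_le.mp hlb
    have hsqm : m^2 ≤ ‖ξ‖^2 := pow_le_pow_left₀ hm0.le hξm 2
    have hsqM : ‖ξ‖^2 ≤ M^2 := pow_le_pow_left₀ (norm_nonneg ξ) hξM 2
    have hrp1 : ((1+(-t):ℝ)) ^ (-μ) ≤ 1 :=
      Real.rpow_le_one_of_one_le_of_nonpos (by linarith) (by linarith)
    have hCrp : C * (1+(-t)) ^ (-μ) ≤ C := by
      have := mul_le_mul_of_nonneg_left hrp1 hC.le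
      linarith
    have hlamΛ : lamm ξ t ∈ Λ := by
      constructor
      · linarith [hlb2.1, hsmall, hsqm]
      · linarith [hlb2.2, hsqM, hCrp]
    have hxlow : R₀ < ‖xm ξ t‖ := by
      have h2t : ‖((2*t) : ℝ) • ξ‖ = 2*(-t)*‖ξ‖ := by
        rw [norm_smul, Real.norm_eq_abs, abs_of_neg (by linarith : (2*t:ℝ) < 0)]
        ring
      have tri : ‖((2*t):ℝ) • ξ‖ - ‖xm ξ t‖ ≤ ‖xm ξ t - (2*t) • ξ‖ := by
        rw [norm_sub_rev]
        exact norm_sub_norm_le _ _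
      have hmm : (-t)*m ≤ (-t)*‖ξ‖ := mul_le_mul_of_nonneg_left hξm (by linarith)
      linarith [hgrow, hxb, tri, h2t, hmm]
    have hx0 : xm ξ t ≠ 0 := by
      intro h; rw [h, norm_zero] at hxlow; exact absurd hxlow (not_lt.mpr hR₀.le)
    have heik := hEik (xm ξ t) (lamm ξ t) hlamΛ hxlow
    have hgradK := myKsliceGrad hY.1 hx0 hlampos
    have hξ' : ξ = gradient (fun y => -(Kfun n Y (lamm ξ t) y)) (xm ξ t) := by
      have e1 : gradient (fun y => -(Kfun n Y (lamm ξ t) y)) (xm ξ t)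
          = -(gradient (fun y => Kfun n Y (lamm ξ t) y) (xm ξ t)) := by
        rw [(myHasGradientAt_neg hgradK).gradient, hgradK.gradient]
      rw [e1]; exact hg
    have ht' : t = deriv (fun l => -(Kfun n Y l (xm ξ t))) (lamm ξ t) := by
      rw [show (fun l => -(Kfun n Y l (xm ξ t))) = -(fun l => Kfun n Y l (xm ξ t)) from rfl,
          deriv.neg]; exact hd
    have hD1 := mySliceDiff isOpen_ne isOpen_Iio hxm (hA hξA) (ht0 : t ∈ Set.Iio 0)
    have hD2 := mySliceDiff isOpen_ne isOpen_Iio hlamm (hA hξA) (ht0 : t ∈ Set.Iio 0)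
    have hKd := (myKdiff hY.1 hx0 hlampos).neg
    obtain ⟨hG, hD⟩ := myCore (fun p : Euc n × ℝ => -(Kfun n Y p.2 p.1)) xm lamm ξ t hKd
      hD1.1 hD2.1 hD1.2 hD2.2 hξ' ht'
    have hfeq : (fun ζ => SMinus n Y xm lamm ζ t)
        = (fun ζ => ⟪xm ζ t, ζ⟫ + lamm ζ t * t - (-(Kfun n Y (lamm ζ t) (xm ζ t)))) := by
      funext ζ; simp [SMinus, sub_neg_eq_add]
    have hfeq2 : (fun s => SMinus n Y xm lamm ξ s)
        = (fun s => ⟪xm ξ s, ξ⟫ + lamm ξ s * s - (-(Kfun n Y (lamm ξ s) (xm ξ s)))) := by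
      funext s; simp [SMinus, sub_neg_eq_add]
    have hG' : HasGradientAt (fun ζ => SMinus n Y xm lamm ζ t) (xm ξ t) ξ := by
      rw [hfeq]; exact hG
    have hD' : HasDerivAt (fun s => SMinus n Y xm lamm ξ s) (lamm ξ t) t := by
      rw [hfeq2]; exact hD
    have hgr : gradient (fun y => Kfun n Y (lamm ξ t) y) (xm ξ t) = -ξ :=
      neg_eq_iff_eq_neg.mp (by rw [← hg])
    rw [hgr, norm_neg] at heik
    refine ⟨hG'.gradient, hD'.deriv, ?_⟩
    rw [hG'.gradient, hD'.deriv]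
    linarith [heik]
end
end

section
/- Let c ∈ ℝ ∖ {0} and ε ∈ (0,1), and let φ : [1,∞) → ℂ be continuously differentiable with I := ∫_1^∞ r^{-ε} |φ'(r)| dr < ∞. Then there exists C > 0 (depending only on c, ε, |φ(1)| and I) such that | ∫_1^ρ e^{icr} φ(r) dr | ≤ C ρ^ε for all ρ ≥ 1; in particular, ρ^{-1} ∫_1^ρ e^{icr} φ(r) dr → 0 as ρ → ∞. -/
open MeasureTheory Filter
open scoped Topology

/-- if `φ` is `C¹` on `[1,∞)` with `∫_1^∞ r^{-ε} |φ'(r)| dr < ∞`,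
then `∫_1^ρ e^{icr} φ(r) dr = O(ρ^ε)`; in particular its Cesàro mean tends to `0`. -/
theorem stmt10 (c ε : ℝ) (hc : c ≠ 0) (hε0 : 0 < ε) (hε1 : ε < 1)
    (φ φ' : ℝ → ℂ)
    (hd : ∀ r ∈ Set.Ici (1 : ℝ), HasDerivWithinAt φ (φ' r) (Set.Ici 1) r)
    (hcont : ContinuousOn φ' (Set.Ici 1))
    (hI : IntegrableOn (fun r : ℝ => r ^ (-ε) * ‖φ' r‖) (Set.Ici 1)) :
    (∃ C : ℝ, 0 < C ∧ ∀ ρ : ℝ, 1 ≤ ρ →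
        ‖∫ r in Set.Ioc (1 : ℝ) ρ, Complex.exp (Complex.I * (c : ℂ) * (r : ℂ)) * φ r‖ ≤
          C * ρ ^ ε) ∧
      Tendsto (fun ρ : ℝ => ((ρ : ℂ))⁻¹ *
          ∫ r in Set.Ioc (1 : ℝ) ρ, Complex.exp (Complex.I * (c : ℂ) * (r : ℂ)) * φ r)
        atTop (𝓝 0) := by
  have hcabs : (0:ℝ) < |c| := abs_pos.mpr hc
  set I : ℝ := ∫ r in Set.Ici (1 : ℝ), r ^ (-ε) * ‖φ' r‖ with hIdef
  have hI0 : 0 ≤ I := setIntegral_nonneg measurableSet_Ici (fun r hr => by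
    have : (0:ℝ) < r := lt_of_lt_of_le one_pos hr
    positivity)
  have hexp : ∀ r : ℝ, ‖Complex.exp (Complex.I * (c : ℂ) * (r : ℂ))‖ = 1 := by
    intro r
    rw [Complex.norm_exp]
    simp
  have hic : (Complex.I * (c : ℂ)) ≠ 0 := by
    simp [Complex.ext_iff, hc]
  set v : ℝ → ℂ := fun r => Complex.exp (Complex.I * (c : ℂ) * (r : ℂ)) / (Complex.I * c)
    with hvdef
  have hv : ∀ r : ℝ, HasDerivAt v (Complex.exp (Complex.I * (c : ℂ) * (r : ℂ))) r := by
    intro r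
    have h1 : HasDerivAt (fun r : ℝ => (r : ℂ)) 1 r := Complex.ofRealCLM.hasDerivAt
    have h2 : HasDerivAt (fun r : ℝ => Complex.I * (c : ℂ) * (r : ℂ))
        (Complex.I * c) r := by simpa using h1.const_mul (Complex.I * (c:ℂ))
    have h3 := h2.cexp
    have h4 := h3.div_const (Complex.I * c)
    rw [mul_div_cancel_right₀ _ hic] at h4
    exact h4
  have hvnorm : ∀ r : ℝ, ‖v r‖ = 1 / |c| := by
    intro r
    rw [hvdef]
    simp only [norm_div, hexp]
    congr 1
    simp
  have hφcont : ContinuousOn φ (Set.Ici (1:ℝ)) :=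
    fun r hr => (hd r hr).continuousWithinAt
  -- the key uniform bound
  set C : ℝ := (2 * ‖φ 1‖ + 2 * I) / |c| + 1 with hCdef
  have hC0 : 0 < C := by positivity
  have key : ∀ ρ : ℝ, 1 ≤ ρ →
      ‖∫ r in Set.Ioc (1 : ℝ) ρ, Complex.exp (Complex.I * (c : ℂ) * (r : ℂ)) * φ r‖ ≤
        C * ρ ^ ε := by
    intro ρ hρ
    have hρ0 : (0:ℝ) < ρ := lt_of_lt_of_le one_pos hρ
    have hsub : Set.Icc (1:ℝ) ρ ⊆ Set.Ici 1 := Set.Icc_subset_Ici_self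
    have huicc : Set.uIcc (1:ℝ) ρ = Set.Icc 1 ρ := Set.uIcc_of_le hρ
    have hsub' : Set.uIcc (1:ℝ) ρ ⊆ Set.Ici 1 := by rw [huicc]; exact hsub
    have hρε1 : (1:ℝ) ≤ ρ ^ ε := by
      have := Real.rpow_le_rpow (by norm_num) hρ hε0.le
      rwa [Real.one_rpow] at this
    -- integrabilities
    have hφ'i : IntervalIntegrable φ' volume 1 ρ := by
      apply ContinuousOn.intervalIntegrable
      exact hcont.mono hsub'
    have hvi : IntervalIntegrable (fun r : ℝ => Complex.exp (Complex.I * (c:ℂ) * (r:ℂ)))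
        volume 1 ρ := by
      apply Continuous.intervalIntegrable
      exact Complex.continuous_exp.comp (continuous_const.mul Complex.continuous_ofReal)
    -- J bound
    have hJ : ∫ r in Set.Ioc (1:ℝ) ρ, ‖φ' r‖ ≤ ρ ^ ε * I := by
      have hIocIci : Set.Ioc (1:ℝ) ρ ⊆ Set.Ici 1 := fun x hx => hx.1.le
      have h3 : IntegrableOn (fun r : ℝ => ‖φ' r‖) (Set.Ioc 1 ρ) :=
        (hφ'i.1).norm
      have h2 : IntegrableOn (fun r : ℝ => ρ ^ ε * (r ^ (-ε) * ‖φ' r‖)) (Set.Ioc 1 ρ) :=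
        (hI.mono_set hIocIci).const_mul _
      have h1 : ∀ r ∈ Set.Ioc (1:ℝ) ρ, ‖φ' r‖ ≤ ρ ^ ε * (r ^ (-ε) * ‖φ' r‖) := by
        intro r hr
        have hr0 : (0:ℝ) < r := lt_trans one_pos hr.1
        have hee : r ^ ε * r ^ (-ε) = 1 := by
          rw [← Real.rpow_add hr0]; simp
        have hle : r ^ ε ≤ ρ ^ ε := Real.rpow_le_rpow hr0.le hr.2 hε0.le
        calc ‖φ' r‖ = (r ^ ε * r ^ (-ε)) * ‖φ' r‖ := by rw [hee, one_mul]
          _ ≤ (ρ ^ ε * r ^ (-ε)) * ‖φ' r‖ := by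
              apply mul_le_mul_of_nonneg_right _ (norm_nonneg _)
              exact mul_le_mul_of_nonneg_right hle (Real.rpow_nonneg hr0.le _)
          _ = ρ ^ ε * (r ^ (-ε) * ‖φ' r‖) := by ring
      calc ∫ r in Set.Ioc (1:ℝ) ρ, ‖φ' r‖
          ≤ ∫ r in Set.Ioc (1:ℝ) ρ, ρ ^ ε * (r ^ (-ε) * ‖φ' r‖) :=
            setIntegral_mono_on h3 h2 measurableSet_Ioc h1
        _ = ρ ^ ε * ∫ r in Set.Ioc (1:ℝ) ρ, r ^ (-ε) * ‖φ' r‖ := integral_const_mul _ _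
        _ ≤ ρ ^ ε * I := by
            apply mul_le_mul_of_nonneg_left _ (Real.rpow_nonneg hρ0.le _)
            apply setIntegral_mono_set hI
            · filter_upwards [ae_restrict_mem measurableSet_Ici] with r hr
              have : (0:ℝ) < r := lt_of_lt_of_le one_pos hr
              positivity
            · exact HasSubset.Subset.eventuallyLE hIocIci
    -- FTC: φ ρ - φ 1 = ∫ φ'
    have hftc : ∫ x in (1:ℝ)..ρ, φ' x = φ ρ - φ 1 := by
      apply intervalIntegral.integral_eq_sub_of_hasDeriv_right_of_le hρ
        (hφcont.mono hsub) _ hφ'i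
      intro x hx
      exact (hd x (le_of_lt hx.1)).mono (fun y hy => (hx.1.trans hy).le)
    have hφρ : ‖φ ρ‖ ≤ ‖φ 1‖ + ∫ r in Set.Ioc (1:ℝ) ρ, ‖φ' r‖ := by
      have : φ ρ = φ 1 + ∫ x in (1:ℝ)..ρ, φ' x := by rw [hftc]; ring
      rw [this]
      refine (norm_add_le _ _).trans ?_
      gcongr
      rw [intervalIntegral.integral_of_le hρ]
      exact norm_integral_le_integral_norm _
    -- integration by parts
    have hparts : ∫ x in (1:ℝ)..ρ, φ x * Complex.exp (Complex.I * (c:ℂ) * (x:ℂ)) =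
        φ ρ * v ρ - φ 1 * v 1 - ∫ x in (1:ℝ)..ρ, φ' x * v x := by
      apply intervalIntegral.integral_mul_deriv_eq_deriv_mul_of_hasDerivWithinAt
        (fun x hx => (hd x (hsub' hx)).mono hsub')
        (fun x _ => (hv x).hasDerivWithinAt) hφ'i hvi
    -- bound on last integral
    have hlast : ‖∫ x in (1:ℝ)..ρ, φ' x * v x‖ ≤
        (∫ r in Set.Ioc (1:ℝ) ρ, ‖φ' r‖) * (1 / |c|) := by
      rw [intervalIntegral.integral_of_le hρ]
      refine (norm_integral_le_integral_norm _).trans ?_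
      have : ∀ r : ℝ, ‖φ' r * v r‖ = ‖φ' r‖ * (1 / |c|) := by
        intro r; rw [norm_mul, hvnorm]
      simp_rw [this]
      rw [integral_mul_const]
    -- put everything together
    have heq : ∫ r in Set.Ioc (1 : ℝ) ρ, Complex.exp (Complex.I * (c : ℂ) * (r : ℂ)) * φ r =
        φ ρ * v ρ - φ 1 * v 1 - ∫ x in (1:ℝ)..ρ, φ' x * v x := by
      rw [← hparts, ← intervalIntegral.integral_of_le hρ]
      apply intervalIntegral.integral_congr
      intro x _
      exact mul_comm _ _
    rw [heq]
    have hJ0 : 0 ≤ ∫ r in Set.Ioc (1:ℝ) ρ, ‖φ' r‖ :=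
      setIntegral_nonneg measurableSet_Ioc (fun r _ => norm_nonneg _)
    calc ‖φ ρ * v ρ - φ 1 * v 1 - ∫ x in (1:ℝ)..ρ, φ' x * v x‖
        ≤ ‖φ ρ * v ρ - φ 1 * v 1‖ + ‖∫ x in (1:ℝ)..ρ, φ' x * v x‖ := norm_sub_le _ _
      _ ≤ (‖φ ρ * v ρ‖ + ‖φ 1 * v 1‖) + (∫ r in Set.Ioc (1:ℝ) ρ, ‖φ' r‖) * (1 / |c|) := by
          gcongr
          exact norm_sub_le _ _
      _ = (‖φ ρ‖ + ‖φ 1‖ + ∫ r in Set.Ioc (1:ℝ) ρ, ‖φ' r‖) * (1 / |c|) := by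
          rw [norm_mul, norm_mul, hvnorm, hvnorm]; ring
      _ ≤ (‖φ 1‖ + ρ ^ ε * I + ‖φ 1‖ + ρ ^ ε * I) * (1 / |c|) := by
          apply mul_le_mul_of_nonneg_right _ (by positivity)
          have := hφρ.trans (by linarith [hJ] : ‖φ 1‖ + ∫ r in Set.Ioc (1:ℝ) ρ, ‖φ' r‖ ≤
            ‖φ 1‖ + ρ ^ ε * I)
          linarith [hJ]
      _ = (2 * ‖φ 1‖ + 2 * (ρ ^ ε * I)) / |c| := by ring
      _ ≤ (2 * ‖φ 1‖ * ρ ^ ε + 2 * (ρ ^ ε * I)) / |c| := by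
          refine (div_le_div_iff_of_pos_right hcabs).mpr ?_
          nlinarith [norm_nonneg (φ 1), hρε1]
      _ = ((2 * ‖φ 1‖ + 2 * I) / |c|) * ρ ^ ε := by ring
      _ ≤ C * ρ ^ ε := by
          apply mul_le_mul_of_nonneg_right _ (by positivity)
          rw [hCdef]; linarith
  refine ⟨⟨C, hC0, key⟩, ?_⟩
  -- Cesàro limit
  refine squeeze_zero_norm' (a := fun ρ : ℝ => C * ρ ^ (ε - 1)) ?_ ?_
  · filter_upwards [eventually_ge_atTop (1:ℝ)] with ρ hρ
    have hρ0 : (0:ℝ) < ρ := lt_of_lt_of_le one_pos hρ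
    have h1 : ‖((ρ:ℂ))⁻¹‖ = ρ⁻¹ := by
      rw [norm_inv, Complex.norm_real, Real.norm_eq_abs, abs_of_nonneg hρ0.le]
    rw [norm_mul, h1]
    calc ρ⁻¹ * ‖∫ r in Set.Ioc (1 : ℝ) ρ, Complex.exp (Complex.I * (c : ℂ) * (r : ℂ)) * φ r‖
        ≤ ρ⁻¹ * (C * ρ ^ ε) := by
          exact mul_le_mul_of_nonneg_left (key ρ hρ) (inv_nonneg.mpr hρ0.le)
      _ = C * ρ ^ (ε - 1) := by
          rw [Real.rpow_sub hρ0, Real.rpow_one]; ring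
  · have h0 : Tendsto (fun ρ : ℝ => ρ ^ (ε - 1)) atTop (𝓝 0) := by
      have := tendsto_rpow_neg_atTop (by linarith : (0:ℝ) < 1 - ε)
      convert this using 2
      ring
    have := h0.const_mul C
    simpa using this
end

section
/- Let c ∈ ℝ ∖ {0} and ε ∈ (0,1), and let φ : [1,∞) → ℂ be continuously differentiable with ∫_1^∞ |φ'(r) + i c φ(r)| dr < ∞ and ∫_1^∞ r^{-ε} |φ(r)| dr < ∞. Then φ(r) → 0 as r → ∞. -/
open MeasureTheory Filter
open scoped Topology

/-- if `φ` is `C¹` on `[1,∞)` with `φ' + icφ` integrable and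
`r^{-ε} |φ|` integrable on `[1,∞)`, then `φ(r) → 0` as `r → ∞`. -/
theorem stmt11 (c ε : ℝ) (hc : c ≠ 0) (hε0 : 0 < ε) (hε1 : ε < 1)
    (φ φ' : ℝ → ℂ)
    (hd : ∀ r ∈ Set.Ici (1 : ℝ), HasDerivWithinAt φ (φ' r) (Set.Ici 1) r)
    (hcont : ContinuousOn φ' (Set.Ici 1))
    (h1 : IntegrableOn (fun r : ℝ => ‖φ' r + Complex.I * (c : ℂ) * φ r‖) (Set.Ici 1))
    (h2 : IntegrableOn (fun r : ℝ => r ^ (-ε) * ‖φ r‖) (Set.Ici 1)) :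
    Tendsto φ atTop (𝓝 0) := by
  set ψ : ℝ → ℂ := fun r => Complex.exp (Complex.I * c * r) * φ r with hψdef
  set ψ' : ℝ → ℂ := fun r =>
    Complex.exp (Complex.I * c * r) * (φ' r + Complex.I * c * φ r) with hψ'def
  have hnorm : ∀ r : ℝ, ‖Complex.exp (Complex.I * (c : ℝ) * (r : ℝ))‖ = 1 := by
    intro r
    rw [show Complex.I * (c : ℝ) * (r : ℝ) = ((c * r : ℝ) : ℂ) * Complex.I by
      push_cast; ring]
    rw [Complex.norm_exp_ofReal_mul_I]
  have hφcont : ContinuousOn φ (Set.Ici 1) := fun r hr => (hd r hr).continuousWithinAt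
  have hecont : Continuous fun r : ℝ => Complex.exp (Complex.I * c * r) := by
    exact Complex.continuous_exp.comp (by continuity)
  have hψ'cont : ContinuousOn ψ' (Set.Ici 1) :=
    hecont.continuousOn.mul (hcont.add (continuousOn_const.mul hφcont))
  have he : ∀ r : ℝ, HasDerivAt (fun r : ℝ => Complex.exp (Complex.I * c * r))
      (Complex.exp (Complex.I * c * r) * (Complex.I * c)) r := by
    intro r
    have h0 : HasDerivAt (fun r : ℝ => Complex.I * c * (r : ℂ)) (Complex.I * c) r := by
      simpa using (Complex.ofRealCLM.hasDerivAt (x := r)).const_mul (Complex.I * (c : ℂ))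
    exact h0.cexp
  have hψd : ∀ r ∈ Set.Ici (1 : ℝ), HasDerivWithinAt ψ (ψ' r) (Set.Ici 1) r := by
    intro r hr
    have := ((he r).hasDerivWithinAt.mul (hd r hr))
    convert this using 1
    · rfl
    · rfl
    simp only [hψ'def]
    ring
  have hψcont : ContinuousOn ψ (Set.Ici 1) := hecont.continuousOn.mul hφcont
  -- integrability of ψ' on Ici 1
  have hψ'int : IntegrableOn ψ' (Set.Ici 1) := by
    refine Integrable.mono' h1 (hψ'cont.aestronglyMeasurable measurableSet_Ici) ?_
    filter_upwards with r
    simp only [hψ'def, norm_mul, hnorm r, one_mul, Real.norm_eq_abs, abs_norm, le_refl]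
  -- FTC
  have key : ∀ r ≥ (1 : ℝ), ψ r = ψ 1 + ∫ t in (1 : ℝ)..r, ψ' t := by
    intro r hr
    have h := intervalIntegral.integral_eq_sub_of_hasDeriv_right_of_le hr
      (hψcont.mono (Set.Icc_subset_Ici_self))
      (fun x hx => (hψd x (le_of_lt hx.1)).mono (Set.Ioi_subset_Ici hx.1.le))
      ((hψ'cont.mono (Set.Icc_subset_Ici_self)).intervalIntegrable_of_Icc hr)
    rw [h]; ring
  have hlim : Tendsto ψ atTop (𝓝 (ψ 1 + ∫ t in Set.Ioi (1 : ℝ), ψ' t)) := by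
    have h := MeasureTheory.intervalIntegral_tendsto_integral_Ioi 1
      (hψ'int.mono_set Set.Ioi_subset_Ici_self) tendsto_id
    refine (tendsto_const_nhds.add h).congr' ?_
    filter_upwards [eventually_ge_atTop (1 : ℝ)] with r hr
    exact (key r hr).symm
  set L : ℂ := ψ 1 + ∫ t in Set.Ioi (1 : ℝ), ψ' t with hL
  clear_value L
  have hnormφ : Tendsto (fun r => ‖φ r‖) atTop (𝓝 ‖L‖) := by
    have h := hlim.norm
    refine h.congr ?_
    intro r
    simp [hψdef, norm_mul, hnorm r]
  by_cases hL0 : L = 0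
  · rw [tendsto_zero_iff_norm_tendsto_zero]
    simpa [hL0] using hnormφ
  · exfalso
    have hpos : 0 < ‖L‖ := norm_pos_iff.mpr hL0
    have hev : ∀ᶠ r in atTop, ‖L‖ / 2 ≤ ‖φ r‖ :=
      hnormφ.eventually (eventually_ge_nhds (by linarith))
    obtain ⟨R, hR⟩ := (hev.and (eventually_ge_atTop (1 : ℝ))).exists_forall_of_atTop
    set R' := max R 1 with hR'
    clear_value R'
    have hR'1 : (1 : ℝ) ≤ R' := hR' ▸ le_max_right R 1
    have hR'pos : (0 : ℝ) < R' := lt_of_lt_of_le one_pos hR'1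
    have hint2 : IntegrableOn (fun r : ℝ => r ^ (-ε) * ‖φ r‖) (Set.Ici R') :=
      h2.mono_set (Set.Ici_subset_Ici.mpr hR'1)
    have hintr : IntegrableOn (fun r : ℝ => ‖L‖ / 2 * r ^ (-ε)) (Set.Ici R') := by
      refine Integrable.mono' hint2 ?_ ?_
      · refine (continuousOn_const.mul ?_).aestronglyMeasurable measurableSet_Ici
        exact ContinuousOn.rpow_const continuousOn_id fun x hx =>
          Or.inl (ne_of_gt (lt_of_lt_of_le hR'pos hx))
      · filter_upwards [ae_restrict_mem measurableSet_Ici] with r hr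
        have h0 : (0 : ℝ) < r := lt_of_lt_of_le hR'pos hr
        have hrpow : 0 ≤ r ^ (-ε) := Real.rpow_nonneg h0.le _
        have hφr : ‖L‖ / 2 ≤ ‖φ r‖ := (hR r (le_trans (hR' ▸ le_max_left R 1) hr)).1
        rw [Real.norm_eq_abs, abs_of_nonneg (by positivity)]
        calc ‖L‖ / 2 * r ^ (-ε) ≤ ‖φ r‖ * r ^ (-ε) := by
              exact mul_le_mul_of_nonneg_right hφr hrpow
          _ = r ^ (-ε) * ‖φ r‖ := by ring
    have hintpow : IntegrableOn (fun r : ℝ => r ^ (-ε)) (Set.Ioi R') := by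
      have h := hintr.const_mul (2 / ‖L‖)
      have harith : ∀ (a x : ℝ), a ≠ 0 → 2 / a * (a / 2 * x) = x := by
        intro a x ha
        field_simp
      have heq : (fun r : ℝ => 2 / ‖L‖ * (‖L‖ / 2 * r ^ (-ε))) = fun r : ℝ => r ^ (-ε) := by
        funext r
        exact harith ‖L‖ (r ^ (-ε)) hpos.ne'
      rw [heq] at h
      exact MeasureTheory.IntegrableOn.mono_set h Set.Ioi_subset_Ici_self
    have := (integrableOn_Ioi_rpow_iff hR'pos).mp hintpow
    linarith
end
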